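/- arXiv:2504.02021 — 8 statements merged into one kernel-verified Lean document; each statement's English description precedes it below -/
import Mathlib

section
/- Let p, q̃, c be positive integers with p ≥ 2, q := q̃·c, and q ≥ 3. Then the greatest power of p that is less than or equal to (q−2)! / (c!^{q̃−2} · (c−1)!^2) is at least (1/p) · (1/q̃²) · (1/(e·c))^{q̃} · q̃^{q}. -/
open Real

-- (n+1)^n ≤ e * n^n
lemma aux_succ_pow_le (n : ℕ) : ((n:ℝ)+1)^n ≤ Real.exp 1 * (n:ℝ)^n := by
  rcases Nat.eq_zero_or_pos n with h | h
  · subst h; simp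
  · have hn0 : (0:ℝ) < n := by exact_mod_cast h
    have h1 : (n:ℝ)+1 ≤ (n:ℝ) * Real.exp (1/n) := by
      have h2 := Real.add_one_le_exp (1/(n:ℝ))
      calc (n:ℝ)+1 = (n:ℝ)*(1/n + 1) := by field_simp; ring
        _ ≤ (n:ℝ) * Real.exp (1/n) := mul_le_mul_of_nonneg_left h2 hn0.le
    calc ((n:ℝ)+1)^n ≤ ((n:ℝ) * Real.exp (1/n))^n := pow_le_pow_left₀ (by positivity) h1 n
      _ = (n:ℝ)^n * Real.exp (1/(n:ℝ))^n := mul_pow _ _ _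
      _ = (n:ℝ)^n * Real.exp 1 := by
          rw [← Real.exp_nat_mul]
          congr 1
          field_simp
      _ = Real.exp 1 * (n:ℝ)^n := mul_comm _ _

-- e * n^(n+1) ≤ (n+1)^(n+1) for n ≥ 1
lemma aux_exp_pow (n : ℕ) (hn : 1 ≤ n) :
    Real.exp 1 * (n:ℝ)^(n+1) ≤ ((n:ℝ)+1)^(n+1) := by
  have hn0 : (0:ℝ) < n := by exact_mod_cast hn
  have hx : (0:ℝ) < Real.exp (1/((n:ℝ)+1)) := Real.exp_pos _
  have h1 : Real.exp (1/((n:ℝ)+1)) * (n:ℝ) ≤ (n:ℝ)+1 := by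
    have h2 := Real.add_one_le_exp (-(1/((n:ℝ)+1)))
    rw [Real.exp_neg] at h2
    have h3 := mul_le_mul_of_nonneg_left h2 hx.le
    rw [mul_inv_cancel₀ (ne_of_gt hx)] at h3
    have h7 : Real.exp (1/((n:ℝ)+1)) * (n:ℝ) / ((n:ℝ)+1) ≤ 1 := by
      calc Real.exp (1/((n:ℝ)+1)) * (n:ℝ) / ((n:ℝ)+1)
          = Real.exp (1/((n:ℝ)+1)) * (-(1/((n:ℝ)+1)) + 1) := by field_simp; try ring
        _ ≤ 1 := h3
    rw [div_le_one (by positivity)] at h7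
    linarith
  have h6 : Real.exp 1 * (n:ℝ)^(n+1) ≤ (Real.exp (1/((n:ℝ)+1)) * (n:ℝ))^(n+1) := by
    rw [mul_pow, ← Real.exp_nat_mul]
    rw [show ((n+1 : ℕ):ℝ) * (1/((n:ℝ)+1)) = 1 by push_cast; field_simp]
  calc Real.exp 1 * (n:ℝ)^(n+1) ≤ (Real.exp (1/((n:ℝ)+1)) * (n:ℝ))^(n+1) := h6
    _ ≤ ((n:ℝ)+1)^(n+1) := pow_le_pow_left₀ (by positivity) h1 _

-- lower bound (k/e)^k ≤ k!
lemma aux_fact_lower (k : ℕ) : ((k:ℝ)/Real.exp 1)^k ≤ (Nat.factorial k : ℝ) := by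
  induction k with
  | zero => simp
  | succ n ih =>
    have hE : (0:ℝ) < Real.exp 1 := Real.exp_pos 1
    have key := aux_succ_pow_le n
    have h1 : (((n:ℝ)+1)/Real.exp 1)^(n+1) ≤ ((n:ℝ)+1) * ((n:ℝ)/Real.exp 1)^n := by
      rw [div_pow, div_pow, div_le_iff₀ (by positivity)]
      calc ((n:ℝ)+1)^(n+1) = ((n:ℝ)+1)^n * ((n:ℝ)+1) := pow_succ _ _
        _ ≤ (Real.exp 1 * (n:ℝ)^n) * ((n:ℝ)+1) :=
            mul_le_mul_of_nonneg_right key (by positivity)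
        _ = ((n:ℝ)+1) * ((n:ℝ)^n / Real.exp 1 ^ n) * Real.exp 1 ^ (n+1) := by
            rw [pow_succ]
            field_simp
            try ring
    have h2 : ((n:ℝ)+1) * ((n:ℝ)/Real.exp 1)^n ≤ ((n:ℝ)+1) * (Nat.factorial n : ℝ) :=
      mul_le_mul_of_nonneg_left ih (by positivity)
    push_cast
    calc (((n:ℝ)+1)/Real.exp 1)^(n+1) ≤ ((n:ℝ)+1) * (Nat.factorial n : ℝ) := h1.trans h2
      _ = ((Nat.factorial (n+1) : ℕ):ℝ) := by rw [Nat.factorial_succ]; push_cast; ring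

-- upper bound k! ≤ e * k * (k/e)^k for k ≥ 1
lemma aux_fact_upper (k : ℕ) (hk : 1 ≤ k) :
    (Nat.factorial k : ℝ) ≤ Real.exp 1 * (k:ℝ) * ((k:ℝ)/Real.exp 1)^k := by
  induction k, hk using Nat.le_induction with
  | base =>
    have hE : (0:ℝ) < Real.exp 1 := Real.exp_pos 1
    simp [Nat.factorial]
  | succ n hn ih =>
    have hE : (0:ℝ) < Real.exp 1 := Real.exp_pos 1
    have hn0 : (0:ℝ) < n := by exact_mod_cast hn
    have key := aux_exp_pow n hn
    have step : ((n:ℝ)+1) * (Real.exp 1 * (n:ℝ) * (((n:ℝ))/Real.exp 1)^n)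
        ≤ Real.exp 1 * ((n:ℝ)+1) * (((n:ℝ)+1)/Real.exp 1)^(n+1) := by
      have e1 : ((n:ℝ)+1) * (Real.exp 1 * (n:ℝ) * ((n:ℝ)^n/Real.exp 1^n))
          = (((n:ℝ)+1) * Real.exp 1 * (n:ℝ) * (n:ℝ)^n) / Real.exp 1 ^ n := by ring
      have e2 : Real.exp 1 * ((n:ℝ)+1) * (((n:ℝ)+1)^(n+1)/Real.exp 1^(n+1))
          = (Real.exp 1 * ((n:ℝ)+1) * ((n:ℝ)+1)^(n+1)) / Real.exp 1^(n+1) := by ring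
      rw [div_pow, div_pow, e1, e2, div_le_div_iff₀ (by positivity) (by positivity)]
      calc ((n:ℝ)+1)*Real.exp 1*(n:ℝ)*(n:ℝ)^n * Real.exp 1^(n+1)
          = (Real.exp 1 * (n:ℝ)^(n+1)) * (((n:ℝ)+1) * Real.exp 1^(n+1)) := by
            rw [pow_succ (n:ℝ)]; ring
        _ ≤ (((n:ℝ)+1)^(n+1)) * (((n:ℝ)+1) * Real.exp 1^(n+1)) :=
            mul_le_mul_of_nonneg_right key (by positivity)
        _ = Real.exp 1 * ((n:ℝ)+1) * ((n:ℝ)+1)^(n+1) * Real.exp 1^n := by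
            rw [pow_succ (Real.exp 1)]; ring
    push_cast
    calc ((Nat.factorial (n+1) : ℕ):ℝ) = ((n:ℝ)+1) * (Nat.factorial n : ℝ) := by
          rw [Nat.factorial_succ]; push_cast; ring
      _ ≤ ((n:ℝ)+1) * (Real.exp 1 * (n:ℝ) * ((n:ℝ)/Real.exp 1)^n) :=
          mul_le_mul_of_nonneg_left ih (by positivity)
      _ ≤ Real.exp 1 * ((n:ℝ)+1) * (((n:ℝ)+1)/Real.exp 1)^(n+1) := step

-- (m+2)^m ≤ e^2 * m^m for m ≥ 1
lemma aux_L3 (m : ℕ) (hm : 1 ≤ m) :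
    ((m:ℝ)+2)^m ≤ Real.exp 1 ^ 2 * (m:ℝ)^m := by
  have hm0 : (0:ℝ) < m := by exact_mod_cast hm
  have h1 : (m:ℝ)+2 ≤ (m:ℝ) * Real.exp (2/m) := by
    have h2 := Real.add_one_le_exp (2/(m:ℝ))
    calc (m:ℝ)+2 = (m:ℝ)*(2/m + 1) := by field_simp; ring
      _ ≤ (m:ℝ) * Real.exp (2/m) := mul_le_mul_of_nonneg_left h2 hm0.le
  calc ((m:ℝ)+2)^m ≤ ((m:ℝ) * Real.exp (2/(m:ℝ)))^m := pow_le_pow_left₀ (by positivity) h1 m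
    _ = (m:ℝ)^m * Real.exp (2/(m:ℝ))^m := mul_pow _ _ _
    _ = (m:ℝ)^m * Real.exp 2 := by
        rw [← Real.exp_nat_mul]
        congr 1
        field_simp
    _ = Real.exp 1 ^ 2 * (m:ℝ)^m := by
        rw [show (2:ℝ) = 1 + 1 by norm_num, Real.exp_add]
        ring

lemma aux_main (qt c q : ℕ) (hqt2 : 2 ≤ qt) (hc : 0 < c) (hq : q = qt * c) (hq3 : 3 ≤ q) :
    (1 / (qt : ℝ) ^ 2) * (1 / (Real.exp 1 * (c : ℝ))) ^ qt * (qt : ℝ) ^ q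
      ≤ (Nat.factorial (q - 2) : ℝ) /
        ((Nat.factorial c : ℝ) ^ (qt - 2) * (Nat.factorial (c - 1) : ℝ) ^ 2) := by
  obtain ⟨s, rfl⟩ : ∃ s, qt = s + 2 := ⟨qt - 2, by omega⟩
  obtain ⟨m, rfl⟩ : ∃ m, q = m + 2 := ⟨q - 2, by omega⟩
  have hm1 : 1 ≤ m := by omega
  have hE : (0:ℝ) < Real.exp 1 := Real.exp_pos 1
  have hcR : (0:ℝ) < c := by exact_mod_cast hc
  have hqtR : (0:ℝ) < (s:ℝ) + 2 := by positivity
  have hfc0 : (0:ℝ) < (Nat.factorial c : ℝ) := by exact_mod_cast Nat.factorial_pos c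
  have hfc1 : (0:ℝ) < (Nat.factorial (c-1) : ℝ) := by exact_mod_cast Nat.factorial_pos (c-1)
  have hfm : (0:ℝ) < (Nat.factorial m : ℝ) := by exact_mod_cast Nat.factorial_pos m
  simp only [Nat.add_sub_cancel]
  -- cast identities
  have hqR : ((s:ℝ)+2) * (c:ℝ) = (m:ℝ)+2 := by
    have : ((s+2) * c : ℕ) = m + 2 := hq.symm
    exact_mod_cast this
  have hfcrel : (Nat.factorial c : ℝ) = (c:ℝ) * (Nat.factorial (c-1) : ℝ) := by
    exact_mod_cast (Nat.mul_factorial_pred hc.ne').symm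
  have hDpos : (0:ℝ) < (Nat.factorial c : ℝ) ^ s * (Nat.factorial (c-1) : ℝ) ^ 2 := by positivity
  -- key product inequality K2
  have fl := aux_fact_lower m
  have fu := aux_fact_upper c hc
  have L3 := aux_L3 m hm1
  -- c!^(s+2) ≤ (e c)^(s+2) * (c^(m+2) / e^(m+2))
  have step1 : (Nat.factorial c : ℝ) ^ (s+2)
      ≤ (Real.exp 1 * (c:ℝ)) ^ (s+2) * ((c:ℝ)^(m+2) / Real.exp 1 ^ (m+2)) := by
    calc (Nat.factorial c : ℝ) ^ (s+2)
        ≤ (Real.exp 1 * (c:ℝ) * ((c:ℝ)/Real.exp 1)^c) ^ (s+2) :=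
          pow_le_pow_left₀ (by positivity) fu _
      _ = (Real.exp 1 * (c:ℝ)) ^ (s+2) * ((c:ℝ)/Real.exp 1)^(c*(s+2)) := by
          rw [mul_pow, ← pow_mul]
      _ = (Real.exp 1 * (c:ℝ)) ^ (s+2) * ((c:ℝ)^(m+2) / Real.exp 1 ^ (m+2)) := by
          rw [show c*(s+2) = m+2 by rw [Nat.mul_comm]; exact hq.symm, div_pow]
  -- S : (m+2)^(m+2) / e^(m+2) ≤ m! * (m+2)^2
  have flm : (m:ℝ)^m ≤ (Nat.factorial m : ℝ) * Real.exp 1 ^ m := by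
    have h := aux_fact_lower m
    rw [div_pow, div_le_iff₀ (by positivity)] at h
    exact h
  have S : ((m:ℝ)+2)^(m+2) / Real.exp 1 ^ (m+2) ≤ (Nat.factorial m : ℝ) * ((m:ℝ)+2)^2 := by
    rw [div_le_iff₀ (by positivity)]
    calc ((m:ℝ)+2)^(m+2) = ((m:ℝ)+2)^m * ((m:ℝ)+2)^2 := by rw [pow_add]
      _ ≤ (Real.exp 1 ^ 2 * (m:ℝ)^m) * ((m:ℝ)+2)^2 :=
          mul_le_mul_of_nonneg_right L3 (by positivity)
      _ ≤ (Real.exp 1 ^ 2 * ((Nat.factorial m : ℝ) * Real.exp 1 ^ m)) * ((m:ℝ)+2)^2 := by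
          have := mul_le_mul_of_nonneg_left flm (show (0:ℝ) ≤ Real.exp 1 ^ 2 by positivity)
          exact mul_le_mul_of_nonneg_right this (by positivity)
      _ = (Nat.factorial m : ℝ) * ((m:ℝ)+2)^2 * Real.exp 1 ^ (m+2) := by
          rw [pow_add]; ring
  -- K2
  have K2 : ((s:ℝ)+2)^(m+2) * (Nat.factorial c : ℝ) ^ (s+2)
      ≤ (Nat.factorial m : ℝ) * ((s:ℝ)+2)^2 * (Real.exp 1 * (c:ℝ))^(s+2) * (c:ℝ)^2 := by
    calc ((s:ℝ)+2)^(m+2) * (Nat.factorial c : ℝ) ^ (s+2)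
        ≤ ((s:ℝ)+2)^(m+2) * ((Real.exp 1 * (c:ℝ)) ^ (s+2) * ((c:ℝ)^(m+2) / Real.exp 1 ^ (m+2))) :=
          mul_le_mul_of_nonneg_left step1 (by positivity)
      _ = (Real.exp 1 * (c:ℝ)) ^ (s+2) * ((((s:ℝ)+2)^(m+2) * (c:ℝ)^(m+2)) / Real.exp 1 ^ (m+2)) := by
          ring
      _ = (Real.exp 1 * (c:ℝ)) ^ (s+2) * (((m:ℝ)+2)^(m+2) / Real.exp 1 ^ (m+2)) := by
          rw [← mul_pow, hqR]
      _ ≤ (Real.exp 1 * (c:ℝ)) ^ (s+2) * ((Nat.factorial m : ℝ) * ((m:ℝ)+2)^2) :=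
          mul_le_mul_of_nonneg_left S (by positivity)
      _ = (Real.exp 1 * (c:ℝ)) ^ (s+2) * ((Nat.factorial m : ℝ) * (((s:ℝ)+2)*(c:ℝ))^2) := by
          rw [hqR]
      _ = (Nat.factorial m : ℝ) * ((s:ℝ)+2)^2 * (Real.exp 1 * (c:ℝ))^(s+2) * (c:ℝ)^2 := by
          rw [mul_pow]; ring
  -- convert K2 to the divided form
  have hYeq : (1 / ((s:ℝ)+2) ^ 2) * (1 / (Real.exp 1 * (c : ℝ))) ^ (s+2) * ((s:ℝ)+2) ^ (m+2)
      = ((s:ℝ)+2)^(m+2) / (((s:ℝ)+2)^2 * (Real.exp 1 * (c:ℝ))^(s+2)) := by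
    rw [div_pow, one_pow]
    field_simp
  have hcast : ((s+2 : ℕ):ℝ) = (s:ℝ)+2 := by push_cast; ring
  rw [show (((s+2 : ℕ)):ℝ) = (s:ℝ)+2 by push_cast; ring] -- may fail; handled below
  rw [hYeq, div_le_div_iff₀ (by positivity) hDpos]
  -- goal : (s+2)^(m+2) * (c!^s * (c-1)!^2) ≤ m! * ((s+2)^2 * (e c)^(s+2))
  have hDD : (Nat.factorial c : ℝ) ^ s * (Nat.factorial (c-1) : ℝ) ^ 2 * (c:ℝ)^2
      = (Nat.factorial c : ℝ) ^ (s+2) := by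
    rw [show s + 2 = s + 2 from rfl, pow_add, hfcrel]
    ring
  have hc2 : (0:ℝ) < (c:ℝ)^2 := by positivity
  rw [← mul_le_mul_iff_of_pos_right hc2]
  calc ((s:ℝ)+2)^(m+2) * ((Nat.factorial c : ℝ) ^ s * (Nat.factorial (c-1) : ℝ) ^ 2) * (c:ℝ)^2
      = ((s:ℝ)+2)^(m+2) * (Nat.factorial c : ℝ) ^ (s+2) := by rw [← hDD]; ring
    _ ≤ (Nat.factorial m : ℝ) * ((s:ℝ)+2)^2 * (Real.exp 1 * (c:ℝ))^(s+2) * (c:ℝ)^2 := K2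
    _ = (Nat.factorial m : ℝ) * (((s:ℝ)+2)^2 * (Real.exp 1 * (c:ℝ))^(s+2)) * (c:ℝ)^2 := by ring

/-- The greatest power of `p` less than or equal to
`(q−2)! / (c!^(q̃−2) · (c−1)!^2)` is at least `(1/p)·(1/q̃²)·(1/(e·c))^q̃·q̃^q`. -/
theorem stmt1 (p qt c : ℕ) (hp : 2 ≤ p) (hqt : 0 < qt) (hc : 0 < c)
    (q : ℕ) (hq : q = qt * c) (hq3 : 3 ≤ q) (j : ℕ)
    (hj : (p : ℝ) ^ j ≤ (Nat.factorial (q - 2) : ℝ) /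
        ((Nat.factorial c : ℝ) ^ (qt - 2) * (Nat.factorial (c - 1) : ℝ) ^ 2))
    (hjmax : ∀ j' : ℕ, (p : ℝ) ^ j' ≤ (Nat.factorial (q - 2) : ℝ) /
        ((Nat.factorial c : ℝ) ^ (qt - 2) * (Nat.factorial (c - 1) : ℝ) ^ 2) → j' ≤ j) :
    (1 / (p : ℝ)) * (1 / (qt : ℝ) ^ 2) * (1 / (Real.exp 1 * (c : ℝ))) ^ qt * (qt : ℝ) ^ q
      ≤ (p : ℝ) ^ j := by
  have hE : (0:ℝ) < Real.exp 1 := Real.exp_pos 1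
  have hE1 : (1:ℝ) ≤ Real.exp 1 := by nlinarith [Real.add_one_le_exp (1:ℝ)]
  have hp1 : (1:ℝ) ≤ (p:ℝ) := by exact_mod_cast Nat.one_le_of_lt hp
  have hppos : (0:ℝ) < (p:ℝ) := lt_of_lt_of_le one_pos hp1
  have hcR : (1:ℝ) ≤ (c:ℝ) := by exact_mod_cast hc
  have hpj : (1:ℝ) ≤ (p:ℝ)^j := by
    calc (1:ℝ) = 1^j := (one_pow j).symm
      _ ≤ (p:ℝ)^j := pow_le_pow_left₀ zero_le_one hp1 j
  rcases eq_or_lt_of_le (show 1 ≤ qt from hqt) with h1 | h2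
  · -- qt = 1
    rw [← h1]
    push_cast
    simp only [one_pow, pow_one, mul_one]
    have hec : (1:ℝ) ≤ Real.exp 1 * (c:ℝ) := by nlinarith
    have hA : 1/(p:ℝ) ≤ 1 := by rw [div_le_one hppos]; exact hp1
    have hB : 1/(Real.exp 1 * (c:ℝ)) ≤ 1 := by
      rw [div_le_one (by positivity)]; exact hec
    have hBpos : (0:ℝ) ≤ 1/(Real.exp 1 * (c:ℝ)) := by positivity
    calc 1/(p:ℝ) * (1/(1:ℝ)) * (1/(Real.exp 1 * (c:ℝ)))
        = 1/(p:ℝ) * (1/(Real.exp 1 * (c:ℝ))) := by norm_num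
      _ ≤ 1 * 1 := mul_le_mul hA hB hBpos zero_le_one
      _ = 1 := by norm_num
      _ ≤ (p:ℝ)^j := hpj
  · -- qt ≥ 2
    have hqt2 : 2 ≤ qt := h2
    have hmain := aux_main qt c q hqt2 hc hq hq3
    set X := (Nat.factorial (q - 2) : ℝ) /
        ((Nat.factorial c : ℝ) ^ (qt - 2) * (Nat.factorial (c - 1) : ℝ) ^ 2) with hX
    have hXlt : X < (p:ℝ)^(j+1) := by
      by_contra hcon
      push_neg at hcon
      have := hjmax (j+1) hcon
      omega
    have hstep : (1/(p:ℝ)) * ((1 / (qt : ℝ) ^ 2) * (1 / (Real.exp 1 * (c : ℝ))) ^ qt * (qt : ℝ) ^ q)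
        ≤ (1/(p:ℝ)) * X := mul_le_mul_of_nonneg_left hmain (by positivity)
    have hstep2 : (1/(p:ℝ)) * X ≤ (1/(p:ℝ)) * (p:ℝ)^(j+1) :=
      mul_le_mul_of_nonneg_left hXlt.le (by positivity)
    have hstep3 : (1/(p:ℝ)) * (p:ℝ)^(j+1) = (p:ℝ)^j := by
      rw [pow_succ]
      field_simp
    calc (1 / (p : ℝ)) * (1 / (qt : ℝ) ^ 2) * (1 / (Real.exp 1 * (c : ℝ))) ^ qt * (qt : ℝ) ^ q
        = (1/(p:ℝ)) * ((1 / (qt : ℝ) ^ 2) * (1 / (Real.exp 1 * (c : ℝ))) ^ qt * (qt : ℝ) ^ q) := by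
          ring
      _ ≤ (1/(p:ℝ)) * X := hstep
      _ ≤ (1/(p:ℝ)) * (p:ℝ)^(j+1) := hstep2
      _ = (p:ℝ)^j := hstep3
end

section
/- Let 0 < ε < 2 and let θ = θ(ε) > 0 be defined by the property that {ν ∈ 𝕋 : |1 − ν| < ε} = {exp(2πiτ) : −θ < τ < θ}, where 𝕋 is the unit circle. Suppose θ < 1/4. Let ν ∈ 𝕋 \ {1} with |1 − ν| < ε, written as ν = exp(2πiτ) with −θ < τ < θ, τ ≠ 0. Then for every finite interval J of ℤ, the number of j ∈ J with |1 − ν^j| < ε is at most (3θ/(1−2θ))·|J| + 6θ/|τ|. -/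
open Classical in
lemma aux_card (s : Finset ℤ) (C : ℝ) (hC : 0 ≤ C)
    (h : ∀ j ∈ s, ∀ k ∈ s, |(j : ℝ) - (k : ℝ)| ≤ C) : (s.card : ℝ) ≤ C + 1 := by
  rcases s.eq_empty_or_nonempty with rfl | hs
  · simp; linarith
  · have hsub : s ⊆ Finset.Icc (s.min' hs) (s.min' hs + ⌊C⌋) := by
      intro j hj
      rw [Finset.mem_Icc]
      refine ⟨Finset.min'_le s j hj, ?_⟩
      have h1 := h j hj (s.min' hs) (s.min'_mem hs)
      have h2 : ((j : ℝ) - (s.min' hs : ℝ)) ≤ C := (abs_le.mp h1).2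
      have h3 : ((j - s.min' hs : ℤ) : ℝ) ≤ C := by push_cast; linarith
      have h4 := Int.le_floor.mpr h3
      omega
    have hle := Finset.card_le_card hsub
    have hcard : (Finset.Icc (s.min' hs) (s.min' hs + ⌊C⌋)).card = (⌊C⌋ + 1).toNat := by
      rw [Int.card_Icc]; ring_nf
    have hfl : (0:ℤ) ≤ ⌊C⌋ := Int.floor_nonneg.mpr hC
    have h5 : (s.card : ℝ) ≤ (((⌊C⌋ + 1).toNat : ℤ) : ℝ) := by
      rw [hcard] at hle; exact_mod_cast hle
    rw [Int.toNat_of_nonneg (by omega)] at h5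
    have := Int.floor_le C
    push_cast at h5
    linarith

/-- Counting lemma for powers of a unit-circle element close to 1 on an integer interval. -/
theorem stmt2 (ε θ τ : ℝ) (hε0 : 0 < ε) (hε2 : ε < 2) (hθ : 0 < θ)
    (hθset : {ν : ℂ | ‖ν‖ = 1 ∧ ‖1 - ν‖ < ε}
      = {ν : ℂ | ∃ t : ℝ, -θ < t ∧ t < θ ∧
          ν = Complex.exp (2 * (Real.pi : ℂ) * Complex.I * (t : ℂ))})
    (hθ4 : θ < 1 / 4)
    (ν : ℂ) (hν1 : ν ≠ 1) (hνabs : ‖ν‖ = 1) (hνε : ‖1 - ν‖ < ε)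
    (hτθ : -θ < τ) (hτθ' : τ < θ) (hτ0 : τ ≠ 0)
    (hντ : ν = Complex.exp (2 * (Real.pi : ℂ) * Complex.I * (τ : ℂ)))
    (a b : ℤ) (hab : a ≤ b) :
    ((Set.ncard {j : ℤ | j ∈ Set.Icc a b ∧ ‖1 - ν ^ j‖ < ε}) : ℝ)
      ≤ (3 * θ / (1 - 2 * θ)) * ((Set.ncard (Set.Icc a b)) : ℝ) + 6 * θ / |τ| := by
  classical
  set δ := |τ| with hδdef
  have hδ0 : 0 < δ := abs_pos.mpr hτ0
  have hδθ : δ < θ := abs_lt.mpr ⟨hτθ, hτθ'⟩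
  have h2θ : 0 < 1 - 2 * θ := by linarith
  have hν0 : ν ≠ 0 := by
    intro h; rw [h] at hνabs; simp at hνabs
  -- Key: powers close to 1 have jτ close to an integer
  have key : ∀ j : ℤ, ‖1 - ν ^ j‖ < ε →
      |(j : ℝ) * τ - round ((j : ℝ) * τ)| < θ := by
    intro j hj
    have habs : ‖ν ^ j‖ = 1 := by
      rw [norm_zpow, hνabs, one_zpow]
    have hmem : ν ^ j ∈ {ν : ℂ | ‖ν‖ = 1 ∧ ‖1 - ν‖ < ε} := ⟨habs, hj⟩
    rw [hθset] at hmem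
    obtain ⟨t, ht1, ht2, ht3⟩ := hmem
    have hνj : ν ^ j = Complex.exp ((j : ℂ) * (2 * (Real.pi : ℂ) * Complex.I * (τ : ℂ))) := by
      rw [hντ, Complex.exp_int_mul]
    have hEq : Complex.exp ((j : ℂ) * (2 * (Real.pi : ℂ) * Complex.I * (τ : ℂ)))
        = Complex.exp (2 * (Real.pi : ℂ) * Complex.I * (t : ℂ)) := by
      rw [← hνj, ← ht3]
    obtain ⟨n, hn⟩ := Complex.exp_eq_exp_iff_exists_int.mp hEq
    have h2πi : (2 * (Real.pi : ℂ) * Complex.I) ≠ 0 :=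
      mul_ne_zero (mul_ne_zero two_ne_zero (Complex.ofReal_ne_zero.mpr Real.pi_ne_zero))
        Complex.I_ne_zero
    have hC : (2 * (Real.pi : ℂ) * Complex.I) * ((j : ℂ) * (τ : ℂ))
        = (2 * (Real.pi : ℂ) * Complex.I) * ((t : ℂ) + (n : ℂ)) := by
      linear_combination hn
    have hC2 : ((j : ℂ)) * (τ : ℂ) = (t : ℂ) + (n : ℂ) := mul_left_cancel₀ h2πi hC
    have hR : (j : ℝ) * τ = t + n := by exact_mod_cast hC2
    have hclose : |(j : ℝ) * τ - (n : ℝ)| < θ := by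
      rw [hR]; simp only [add_sub_cancel_right]
      rw [abs_lt]; exact ⟨ht1, ht2⟩
    exact lt_of_le_of_lt (round_le ((j : ℝ) * τ) n) hclose
  -- set up finsets
  set T : Finset ℤ := (Finset.Icc a b).filter (fun j => ‖1 - ν ^ j‖ < ε) with hT
  have hSet : {j : ℤ | j ∈ Set.Icc a b ∧ ‖1 - ν ^ j‖ < ε} = ↑T := by
    ext j; simp [hT, Set.mem_Icc, Finset.mem_Icc]
  set m₁ : ℤ := ⌈min ((a : ℝ) * τ) ((b : ℝ) * τ) - θ⌉ with hm₁
  set m₂ : ℤ := ⌊max ((a : ℝ) * τ) ((b : ℝ) * τ) + θ⌋ with hm₂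
  set M : Finset ℤ := Finset.Icc m₁ m₂ with hM
  have hmemM : ∀ j ∈ T, round ((j : ℝ) * τ) ∈ M := by
    intro j hj
    rw [hT, Finset.mem_filter, Finset.mem_Icc] at hj
    obtain ⟨⟨hja, hjb⟩, hjε⟩ := hj
    have hja' : (a : ℝ) ≤ j := by exact_mod_cast hja
    have hjb' : (j : ℝ) ≤ b := by exact_mod_cast hjb
    have hbound : min ((a : ℝ) * τ) ((b : ℝ) * τ) ≤ (j : ℝ) * τ ∧
        (j : ℝ) * τ ≤ max ((a : ℝ) * τ) ((b : ℝ) * τ) := by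
      rcases le_or_gt 0 τ with hτpos | hτneg
      · constructor
        · exact le_trans (min_le_left _ _) (mul_le_mul_of_nonneg_right hja' hτpos)
        · exact le_trans (mul_le_mul_of_nonneg_right hjb' hτpos) (le_max_right _ _)
      · constructor
        · exact le_trans (min_le_right _ _) (mul_le_mul_of_nonpos_right hjb' hτneg.le)
        · exact le_trans (mul_le_mul_of_nonpos_right hja' hτneg.le) (le_max_left _ _)
    have hk := key j hjε
    rw [abs_lt] at hk
    rw [hM, Finset.mem_Icc]
    constructor
    · rw [hm₁]; apply Int.ceil_le.mpr; linarith [hbound.1]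
    · rw [hm₂]; apply Int.le_floor.mpr; linarith [hbound.2]
  -- fiberwise count
  have hsum := Finset.card_eq_sum_card_fiberwise hmemM
  have hfiber : ∀ m ∈ M, ((T.filter (fun j : ℤ => round ((j : ℝ) * τ) = m)).card : ℝ)
      ≤ 2 * θ / δ + 1 := by
    intro m _
    apply aux_card _ _ (by positivity)
    intro j hj k hk
    rw [Finset.mem_filter] at hj hk
    have h1 := key j (by rw [hT, Finset.mem_filter] at hj; exact hj.1.2)
    have h2 := key k (by rw [hT, Finset.mem_filter] at hk; exact hk.1.2)
    rw [hj.2] at h1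
    rw [hk.2] at h2
    have hd : |(j : ℝ) * τ - (k : ℝ) * τ| < 2 * θ := by
      calc |(j : ℝ) * τ - (k : ℝ) * τ|
          = |((j : ℝ) * τ - m) - ((k : ℝ) * τ - m)| := by congr 1; ring
        _ ≤ |(j : ℝ) * τ - m| + |(k : ℝ) * τ - m| := abs_sub _ _
        _ < 2 * θ := by linarith
    have hd2 : |(j : ℝ) - (k : ℝ)| * δ < 2 * θ := by
      rw [hδdef, ← abs_mul, sub_mul]; exact hd
    exact (le_div_iff₀ hδ0).mpr hd2.le
  have hMcard : (M.card : ℝ) ≤ ((b : ℝ) - a) * δ + 2 * θ + 1 := by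
    have hba : (0 : ℝ) ≤ (b : ℝ) - a := by
      have : (a : ℝ) ≤ b := by exact_mod_cast hab
      linarith
    have hmaxmin : max ((a : ℝ) * τ) ((b : ℝ) * τ) - min ((a : ℝ) * τ) ((b : ℝ) * τ)
        = ((b : ℝ) - a) * δ := by
      rw [max_sub_min_eq_abs, hδdef, ← abs_of_nonneg hba, ← abs_mul]
      first
      | (congr 1; ring)
      | (rw [abs_sub_comm]; congr 1; ring)
    rcases le_or_gt m₁ m₂ with h | h
    · have hc : (M.card : ℝ) = (m₂ : ℝ) - m₁ + 1 := by
        have h' : (M.card : ℤ) = m₂ + 1 - m₁ := by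
          rw [hM, Int.card_Icc, Int.toNat_of_nonneg (by omega)]
        have h'' := congrArg (fun z : ℤ => (z : ℝ)) h'
        push_cast at h''
        linarith
      have h1 := Int.le_ceil (min ((a : ℝ) * τ) ((b : ℝ) * τ) - θ)
      have h2 := Int.floor_le (max ((a : ℝ) * τ) ((b : ℝ) * τ) + θ)
      rw [← hm₁] at h1; rw [← hm₂] at h2
      rw [hc]; linarith
    · have : M = ∅ := by rw [hM]; exact Finset.Icc_eq_empty (by omega)
      rw [this]
      simp only [Finset.card_empty, Nat.cast_zero]
      nlinarith
  have hTcard : (T.card : ℝ) ≤ (((b : ℝ) - a) * δ + 2 * θ + 1) * (2 * θ / δ + 1) := by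
    calc (T.card : ℝ) = ∑ m ∈ M, ((T.filter (fun j : ℤ => round ((j : ℝ) * τ) = m)).card : ℝ) := by
          rw [hsum]; push_cast; ring
      _ ≤ ∑ _m ∈ M, (2 * θ / δ + 1) := Finset.sum_le_sum hfiber
      _ = (M.card : ℝ) * (2 * θ / δ + 1) := by rw [Finset.sum_const, nsmul_eq_mul]
      _ ≤ (((b : ℝ) - a) * δ + 2 * θ + 1) * (2 * θ / δ + 1) := by
          apply mul_le_mul_of_nonneg_right hMcard (by positivity)
  -- rewrite goal
  rw [hSet, Set.ncard_coe_finset, ← Finset.coe_Icc, Set.ncard_coe_finset]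
  have hIcc : ((Finset.Icc a b).card : ℝ) = (b : ℝ) - a + 1 := by
    have h' : ((Finset.Icc a b).card : ℤ) = b + 1 - a := by
      rw [Int.card_Icc, Int.toNat_of_nonneg (by omega)]
    have h'' := congrArg (fun z : ℤ => (z : ℝ)) h'
    push_cast at h''
    linarith
  rw [hIcc]
  set N : ℝ := (b : ℝ) - a with hN
  have hN0 : 0 ≤ N := by
    have : (a : ℝ) ≤ b := by exact_mod_cast hab
    rw [hN]; linarith
  -- final arithmetic
  have hpoly : (N * δ + 2 * θ + 1) * (2 * θ + δ) * (1 - 2 * θ)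
      ≤ 3 * θ * δ * (N + 1) + 6 * θ * (1 - 2 * θ) := by
    nlinarith [mul_nonneg hN0 (sub_nonneg.mpr hδθ.le), mul_nonneg (mul_nonneg hN0 hδ0.le) h2θ.le,
      mul_pos hδ0 h2θ, sq_nonneg θ, mul_nonneg hN0 hδ0.le,
      mul_nonneg (mul_nonneg hN0 (sub_nonneg.mpr hδθ.le)) h2θ.le,
      mul_nonneg (sub_nonneg.mpr hδθ.le) h2θ.le, mul_pos hθ hδ0]
  have hfinal : (N * δ + 2 * θ + 1) * (2 * θ / δ + 1)
      ≤ 3 * θ / (1 - 2 * θ) * (N + 1) + 6 * θ / δ := by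
    have e1 : (N * δ + 2 * θ + 1) * (2 * θ / δ + 1)
        = ((N * δ + 2 * θ + 1) * (2 * θ + δ) * (1 - 2 * θ)) / (δ * (1 - 2 * θ)) := by
      field_simp
    have e2 : 3 * θ / (1 - 2 * θ) * (N + 1) + 6 * θ / δ
        = (3 * θ * δ * (N + 1) + 6 * θ * (1 - 2 * θ)) / (δ * (1 - 2 * θ)) := by
      rw [div_mul_eq_mul_div, div_add_div _ _ h2θ.ne' hδ0.ne']; ring
    rw [e1, e2]
    apply div_le_div_of_nonneg_right hpoly (by positivity)
  linarith
end

section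
/- Let S and T be aperiodic measurable bijections on a Borel space X (defined on all of X) such that Orb_S(x) = Orb_T(x) for every x ∈ X, and such that the cocycle c_S : X → ℤ defined by Sx = T^{c_S(x)}x is measurable. If S is uniquely ergodic then T is uniquely ergodic, and in that case S and T have the same unique invariant Borel probability measure. -/
open MeasureTheory

private lemma measurable_perm_zpow {X : Type*} [MeasurableSpace X] (T : Equiv.Perm X)
    (hT : Measurable T) (hT' : Measurable T.symm) : ∀ n : ℤ, Measurable ⇑(T ^ n) := by
  have hnat : ∀ (U : Equiv.Perm X), Measurable U → ∀ k : ℕ, Measurable ⇑(U ^ k) := by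
    intro U hU k
    induction k with
    | zero => simpa using measurable_id
    | succ k ih =>
      have : ⇑(U ^ (k + 1)) = ⇑(U ^ k) ∘ ⇑U := by
        rw [pow_succ]; rfl
      rw [this]; exact ih.comp hU
  intro n
  cases n with
  | ofNat k => simpa using hnat T hT k
  | negSucc k =>
    have : (T ^ (Int.negSucc k)) = (T⁻¹) ^ (k + 1) := by
      rw [zpow_negSucc, inv_pow]
    rw [this]
    exact hnat T⁻¹ hT' (k + 1)

private lemma mp_perm_zpow {X : Type*} [MeasurableSpace X] (T : Equiv.Perm X)
    (hT : Measurable T) (hT' : Measurable T.symm) {μ : Measure X}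
    (h : MeasurePreserving (⇑T) μ μ) : ∀ n : ℤ, MeasurePreserving ⇑(T ^ n) μ μ := by
  have hsymm : MeasurePreserving (⇑T.symm) μ μ := by
    refine ⟨hT', ?_⟩
    conv_lhs => rw [← h.map_eq]
    rw [Measure.map_map hT' hT]
    simp
  have hnat : ∀ (U : Equiv.Perm X), MeasurePreserving (⇑U) μ μ → ∀ k : ℕ,
      MeasurePreserving ⇑(U ^ k) μ μ := by
    intro U hU k
    induction k with
    | zero => simpa using MeasurePreserving.id μ
    | succ k ih =>
      have : ⇑(U ^ (k + 1)) = ⇑(U ^ k) ∘ ⇑U := by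
        rw [pow_succ]; rfl
      rw [this]; exact ih.comp hU
  intro n
  cases n with
  | ofNat k => simpa using hnat T h k
  | negSucc k =>
    have : (T ^ (Int.negSucc k)) = (T⁻¹) ^ (k + 1) := by
      rw [zpow_negSucc, inv_pow]
    rw [this]
    exact hnat T⁻¹ hsymm (k + 1)

private lemma zpow_apply_inj {X : Type*} (S : Equiv.Perm X)
    (hSa : ∀ (x : X) (n : ℤ), n ≠ 0 → (S ^ n) x ≠ x)
    (x : X) {m n : ℤ} (h : (S ^ m) x = (S ^ n) x) : m = n := by
  by_contra hmn
  apply hSa ((S ^ n) x) (m - n) (sub_ne_zero.mpr hmn)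
  have h2 : (S ^ (m - n + n)) x = (S ^ n) x := by rw [sub_add_cancel]; exact h
  rw [zpow_add, Equiv.Perm.mul_apply] at h2
  exact h2

/-- Key transfer lemma: if `S x = T^(c x) x` with measurable cocycle `c`,
then every `T`-invariant measure is `S`-invariant. -/
private lemma transfer_mp {X : Type*} [MeasurableSpace X] (S T : Equiv.Perm X)
    (hSm : Measurable S) (hTm : Measurable T) (hTm' : Measurable T.symm)
    (c : X → ℤ) (hcm : Measurable c) (hc : ∀ x, S x = (T ^ c x) x)
    (μ : Measure X) (hT : MeasurePreserving (⇑T) μ μ) :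
    MeasurePreserving (⇑S) μ μ := by
  have hTz : ∀ n : ℤ, Measurable ⇑(T ^ n) := measurable_perm_zpow T hTm hTm'
  have hTP : ∀ n : ℤ, MeasurePreserving ⇑(T ^ n) μ μ := mp_perm_zpow T hTm hTm' hT
  refine ⟨hSm, Measure.ext fun B hB => ?_⟩
  rw [Measure.map_apply hSm hB]
  set A : ℤ → Set X := fun n => c ⁻¹' {n} with hA
  have hAm : ∀ n, MeasurableSet (A n) := fun n => hcm (measurableSet_singleton n)
  have h1 : S ⁻¹' B = ⋃ n, A n ∩ ⇑(T ^ n) ⁻¹' B := by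
    ext x
    simp only [Set.mem_preimage, Set.mem_iUnion, Set.mem_inter_iff, hA,
      Set.mem_singleton_iff]
    constructor
    · intro h; exact ⟨c x, rfl, by rwa [← hc x]⟩
    · rintro ⟨n, rfl, h⟩; rwa [hc x]
  have hd1 : Pairwise (Function.onFun Disjoint fun n => A n ∩ ⇑(T ^ n) ⁻¹' B) := by
    intro m n hmn
    apply Set.disjoint_left.mpr
    rintro x ⟨hm, -⟩ ⟨hn, -⟩
    simp only [hA, Set.mem_preimage, Set.mem_singleton_iff] at hm hn
    exact hmn (hm.symm.trans hn)
  have hμ1 : μ (S ⁻¹' B) = ∑' n : ℤ, μ (A n ∩ ⇑(T ^ n) ⁻¹' B) := by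
    rw [h1, measure_iUnion hd1 (fun n => (hAm n).inter ((hTz n) hB))]
  have himg : ∀ n : ℤ, ⇑(T ^ n) '' (A n) = ⇑(T ^ (-n)) ⁻¹' (A n) := by
    intro n
    rw [Equiv.image_eq_preimage_symm]
    have : (T ^ n).symm = T ^ (-n) := by
      rw [zpow_neg]; rfl
    rw [this]
  have himgm : ∀ n : ℤ, MeasurableSet (⇑(T ^ n) '' (A n)) := by
    intro n; rw [himg n]; exact (hTz (-n)) (hAm n)
  have h2 : B = ⋃ n, B ∩ ⇑(T ^ n) '' (A n) := by
    ext y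
    simp only [Set.mem_iUnion, Set.mem_inter_iff]
    constructor
    · intro hy
      refine ⟨c (S.symm y), hy, ⟨S.symm y, ?_, ?_⟩⟩
      · simp [hA]
      · rw [← hc (S.symm y)]; exact S.apply_symm_apply y
    · rintro ⟨n, hy, -⟩; exact hy
  have hd2 : Pairwise (Function.onFun Disjoint fun n => B ∩ ⇑(T ^ n) '' (A n)) := by
    intro m n hmn
    apply Set.disjoint_left.mpr
    rintro y ⟨-, x, hx, hxy⟩ ⟨-, x', hx', hxy'⟩
    simp only [hA, Set.mem_preimage, Set.mem_singleton_iff] at hx hx'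
    have e1 : S x = y := by rw [hc x, hx]; exact hxy
    have e2 : S x' = y := by rw [hc x', hx']; exact hxy'
    have hxx : x = x' := S.injective (e1.trans e2.symm)
    have : c x = n := by rw [hxx]; exact hx'
    exact hmn (hx.symm.trans this)
  have hμ2 : μ B = ∑' n : ℤ, μ (B ∩ ⇑(T ^ n) '' (A n)) := by
    conv_lhs => rw [h2]
    exact measure_iUnion hd2 (fun n => hB.inter (himgm n))
  rw [hμ1, hμ2]
  refine tsum_congr fun n => ?_
  have := (hTP n).measure_preimage (hB.inter (himgm n)).nullMeasurableSet
  rw [← this, Set.preimage_inter, Set.preimage_image_eq _ (Equiv.injective _),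
    Set.inter_comm]

/-- The iterated cocycle: for each `n : ℤ` there is a measurable `g` with
`S^n x = T^(g x) x`. -/
private lemma exists_iter_cocycle {X : Type*} [MeasurableSpace X] (S T : Equiv.Perm X)
    (hSm : Measurable S) (hSm' : Measurable S.symm)
    (hTm : Measurable T) (hTm' : Measurable T.symm)
    (c : X → ℤ) (hcm : Measurable c) (hc : ∀ x, S x = (T ^ c x) x) :
    ∀ n : ℤ, ∃ g : X → ℤ, Measurable g ∧ ∀ x, (S ^ n) x = (T ^ g x) x := by
  intro n
  induction n using Int.induction_on with
  | zero => exact ⟨fun _ => 0, measurable_const, fun x => by simp⟩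
  | succ k ih =>
    obtain ⟨g, hgm, hg⟩ := ih
    refine ⟨fun x => g (S x) + c x, (hgm.comp hSm).add hcm, fun x => ?_⟩
    rw [zpow_add, zpow_one, Equiv.Perm.mul_apply, hg (S x), hc x,
      ← Equiv.Perm.mul_apply, ← zpow_add, ← hc x]
  | pred k ih =>
    obtain ⟨g, hgm, hg⟩ := ih
    refine ⟨fun x => g (S.symm x) - c (S.symm x),
      (hgm.comp hSm').sub (hcm.comp hSm'), fun x => ?_⟩
    have e : (S ^ (-(k : ℤ) - 1)) x = (S ^ (-(k : ℤ))) (S.symm x) := by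
      rw [sub_eq_add_neg, zpow_add, Equiv.Perm.mul_apply, zpow_neg_one]
      rfl
    have e2 : S.symm x = (T ^ (-(c (S.symm x)))) x := by
      have h0 := hc (S.symm x)
      rw [S.apply_symm_apply] at h0
      calc S.symm x
          = (T ^ (-(c (S.symm x)))) ((T ^ (c (S.symm x))) (S.symm x)) := by
            rw [← Equiv.Perm.mul_apply, ← zpow_add, neg_add_cancel, zpow_zero]
            rfl
        _ = (T ^ (-(c (S.symm x)))) x := by rw [← h0]
    rw [e, hg (S.symm x), e2, ← Equiv.Perm.mul_apply, ← zpow_add, ← sub_eq_add_neg,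
      ← e2]

/-- If two aperiodic measurable bijections have the same orbits at every point
(with measurable cocycle), then unique ergodicity passes from one to the other,
with the same invariant measure. -/
theorem stmt5 {X : Type*} [MeasurableSpace X]
    (S T : Equiv.Perm X)
    (hSm : Measurable S) (hSm' : Measurable S.symm)
    (hTm : Measurable T) (hTm' : Measurable T.symm)
    (hSa : ∀ (x : X) (n : ℤ), n ≠ 0 → (S ^ n) x ≠ x)
    (hTa : ∀ (x : X) (n : ℤ), n ≠ 0 → (T ^ n) x ≠ x)
    (horb : ∀ x : X,
      (Set.range fun n : ℤ => (S ^ n) x) = Set.range fun n : ℤ => (T ^ n) x)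
    (cS : X → ℤ) (hcSm : Measurable cS)
    (hcS : ∀ x, S x = (T ^ cS x) x)
    (hS : ∃! μ : Measure X, IsProbabilityMeasure μ ∧ MeasurePreserving (⇑S) μ μ) :
    (∃! ν : Measure X, IsProbabilityMeasure ν ∧ MeasurePreserving (⇑T) ν ν) ∧
      ∀ μ : Measure X,
        (IsProbabilityMeasure μ ∧ MeasurePreserving (⇑S) μ μ) ↔
          (IsProbabilityMeasure μ ∧ MeasurePreserving (⇑T) μ μ) := by
  -- choose the iterated cocycle family
  choose g hgm hg using exists_iter_cocycle S T hSm hSm' hTm hTm' cS hcSm hcS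
  -- existence of the reverse cocycle value at each point
  have hEx : ∀ x : X, ∃ n : ℤ, (S ^ n) x = T x := by
    intro x
    have : T x ∈ Set.range fun n : ℤ => (S ^ n) x := by
      rw [horb x]; exact ⟨1, by simp⟩
    obtain ⟨n, hn⟩ := this
    exact ⟨n, hn⟩
  set cT : X → ℤ := fun x => (hEx x).choose with hcT_def
  have hcT : ∀ x, (S ^ cT x) x = T x := fun x => (hEx x).choose_spec
  -- characterize the fibers of cT
  have hfiber : ∀ n : ℤ, cT ⁻¹' {n} = (g n) ⁻¹' {1} := by
    intro n
    ext x
    simp only [Set.mem_preimage, Set.mem_singleton_iff]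
    constructor
    · intro h
      have h1 : (S ^ n) x = T x := by rw [← h]; exact hcT x
      have h2 : (T ^ g n x) x = (T ^ (1 : ℤ)) x := by
        rw [← hg n x, h1, zpow_one]
      exact zpow_apply_inj T hTa x h2
    · intro h
      have h1 : (S ^ n) x = T x := by rw [hg n x, h, zpow_one]
      exact zpow_apply_inj S hSa x ((hcT x).trans h1.symm)
  have hcTm : Measurable cT := by
    apply measurable_to_countable'
    intro n
    rw [show (cT ⁻¹' {n}) = (g n) ⁻¹' {1} from hfiber n]
    exact (hgm n) (measurableSet_singleton 1)
  have hcT' : ∀ x, T x = (S ^ cT x) x := fun x => (hcT x).symm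
  -- the two transfer directions
  have dirTS : ∀ μ : Measure X, MeasurePreserving (⇑T) μ μ → MeasurePreserving (⇑S) μ μ :=
    fun μ h => transfer_mp S T hSm hTm hTm' cS hcSm hcS μ h
  have dirST : ∀ μ : Measure X, MeasurePreserving (⇑S) μ μ → MeasurePreserving (⇑T) μ μ :=
    fun μ h => transfer_mp T S hTm hSm hSm' cT hcTm hcT' μ h
  obtain ⟨μ₀, ⟨hμ₀p, hμ₀S⟩, huniq⟩ := hS
  constructor
  · refine ⟨μ₀, ⟨hμ₀p, dirST μ₀ hμ₀S⟩, ?_⟩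
    intro ν ⟨hνp, hνT⟩
    exact huniq ν ⟨hνp, dirTS ν hνT⟩
  · intro μ
    exact ⟨fun ⟨hp, h⟩ => ⟨hp, dirST μ h⟩, fun ⟨hp, h⟩ => ⟨hp, dirTS μ h⟩⟩
end

section
/- Let (q_n)_{n≥0} be integers ≥ 2 such that the infinite product ∏_{n≥0}(1 − 1/q_n) converges to a nonzero limit. For each n and each x_{n+1} ∈ {0,…,q_{n+1}−1}, define the permutation σ^{(n)}_{x_{n+1}} of {0,…,q_n−1} by σ^{(n)}_{x_{n+1}}(i) = i + x_{n+1} mod q_n. Then the map ψ : X → X, ψ(x) = (σ^{(n)}_{x_{n+1}}(x_n))_{n≥0} on X = ∏_{n≥0}{0,…,q_n−1} with product measure μ, is not injective on any measurable set of full measure. -/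
open MeasureTheory

/-- The coordinatewise map `ψ(x)_n = x_n + x_{n+1} mod q_n`. -/
def psiShift (q : ℕ → ℕ) (hq : ∀ n, 0 < q n) (x : ∀ n, Fin (q n)) : ∀ n, Fin (q n) :=
  fun n => ⟨((x n : ℕ) + (x (n + 1) : ℕ)) % q n, Nat.mod_lt _ (hq n)⟩

namespace Stmt9

/-- the shift amount: `+1` on even coordinates, `-1` (i.e. `+(q-1)`) on odd ones -/
def e (q : ℕ → ℕ) (n : ℕ) : ℕ := if Even n then 1 else q n - 1

lemma e_le (q : ℕ → ℕ) (hq : ∀ n, 2 ≤ q n) (n : ℕ) : e q n ≤ q n := by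
  unfold e; have := hq n; split <;> omega

/-- the translation `θ` -/
def theta (q : ℕ → ℕ) (hq0 : ∀ n, 0 < q n) (x : ∀ n, Fin (q n)) : ∀ n, Fin (q n) :=
  fun n => ⟨((x n : ℕ) + e q n) % q n, Nat.mod_lt _ (hq0 n)⟩

lemma key_mod (m a c : ℕ) (ha : a < m) (hc : c ≤ m) :
    ((a + c) % m + (m - c)) % m = a := by
  rw [Nat.mod_add_mod]
  have h : a + c + (m - c) = a + m := by omega
  rw [h, Nat.add_mod_right, Nat.mod_eq_of_lt ha]

/-- cylinders -/
def cyl (q : ℕ → ℕ) (n : ℕ) (y : ∀ i, Fin (q i)) : Set (∀ i, Fin (q i)) :=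
  {x | ∀ i < n, x i = y i}

def cylSet (q : ℕ → ℕ) : Set (Set (∀ i, Fin (q i))) := {S | ∃ n y, S = cyl q n y}

lemma measurableSet_cyl (q : ℕ → ℕ) (n : ℕ) (y : ∀ i, Fin (q i)) :
    MeasurableSet (cyl q n y) := by
  have h : cyl q n y = ⋂ i ∈ Set.Iio n, (fun x : ∀ i, Fin (q i) => x i) ⁻¹' {y i} := by
    ext x; simp [cyl]
  rw [h]
  exact MeasurableSet.biInter ((Set.to_countable _))
    (fun i _ => (measurable_pi_apply i) (measurableSet_singleton (y i)))

lemma isPiSystem_cylSet (q : ℕ → ℕ) : IsPiSystem (cylSet q) := by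
  rintro S ⟨n, y, rfl⟩ T ⟨m, z, rfl⟩ ⟨x, hx1, hx2⟩
  refine ⟨max n m, x, ?_⟩
  ext w
  constructor
  · rintro ⟨hw1, hw2⟩ i hi
    rcases lt_or_ge i n with h | h
    · exact (hw1 i h).trans (hx1 i h).symm
    · exact (hw2 i (by omega)).trans (hx2 i (by omega)).symm
  · intro hw
    exact ⟨fun i hi => (hw i (by omega)).trans (hx1 i hi),
      fun i hi => (hw i (by omega)).trans (hx2 i hi)⟩

/-- extend a finite tuple to a full sequence -/
def extt (q : ℕ → ℕ) (hq0 : ∀ n, 0 < q n) {n : ℕ} (t : ∀ i : Fin n, Fin (q i)) :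
    ∀ j, Fin (q j) :=
  fun j => if h : j < n then t ⟨j, h⟩ else ⟨0, hq0 j⟩

lemma singleCoord_mem (q : ℕ → ℕ) (hq0 : ∀ n, 0 < q n) (n : ℕ) (a : Fin (q n)) :
    MeasurableSet[MeasurableSpace.generateFrom (cylSet q)]
      {x : ∀ i, Fin (q i) | x n = a} := by
  have heq : {x : ∀ i, Fin (q i) | x n = a} =
      ⋃ (t : ∀ i : Fin (n + 1), Fin (q i)) (_ : t (Fin.last n) = a),
        cyl q (n + 1) (extt q hq0 t) := by
    ext x
    simp only [Set.mem_setOf_eq, Set.mem_iUnion]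
    constructor
    · intro hx
      refine ⟨fun i => x i, hx, fun i hi => ?_⟩
      simp [extt, hi]
    · rintro ⟨t, ht, hx⟩
      have h := hx n (by omega)
      simp only [extt, Nat.lt_succ_self, dif_pos] at h
      rw [h, ← ht]; rfl
  rw [heq]
  exact MeasurableSet.iUnion fun t => MeasurableSet.iUnion fun _ =>
    MeasurableSpace.measurableSet_generateFrom ⟨n + 1, extt q hq0 t, rfl⟩

lemma pi_eq_generateFrom (q : ℕ → ℕ) (hq0 : ∀ n, 0 < q n) :
    (inferInstance : MeasurableSpace (∀ i, Fin (q i))) =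
      MeasurableSpace.generateFrom (cylSet q) := by
  apply le_antisymm
  · rw [show (inferInstance : MeasurableSpace (∀ i, Fin (q i))) = MeasurableSpace.pi from rfl,
      MeasurableSpace.pi]
    refine iSup_le fun n => ?_
    intro S hS
    obtain ⟨s, -, rfl⟩ := hS
    have h : (fun x : ∀ i, Fin (q i) => x n) ⁻¹' s =
        ⋃ a ∈ s, {x : ∀ i, Fin (q i) | x n = a} := by
      ext x; simp
    rw [h]
    exact MeasurableSet.biUnion s.to_countable fun a _ => singleCoord_mem q hq0 n a
  · refine MeasurableSpace.generateFrom_le ?_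
    rintro S ⟨n, y, rfl⟩
    exact measurableSet_cyl q n y

lemma measurable_theta (q : ℕ → ℕ) (hq0 : ∀ n, 0 < q n) : Measurable (theta q hq0) := by
  apply measurable_pi_lambda
  intro n
  have h : (fun x : ∀ i, Fin (q i) => theta q hq0 x n) =
      (fun a : Fin (q n) => (⟨((a : ℕ) + e q n) % q n, Nat.mod_lt _ (hq0 n)⟩ : Fin (q n))) ∘
        (fun x => x n) := rfl
  rw [h]
  exact (measurable_of_countable _).comp (measurable_pi_apply n)

lemma theta_preimage_cyl (q : ℕ → ℕ) (hq : ∀ n, 2 ≤ q n) (hq0 : ∀ n, 0 < q n)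
    (n : ℕ) (y : ∀ i, Fin (q i)) :
    theta q hq0 ⁻¹' (cyl q n y) =
      cyl q n (fun i => ⟨((y i : ℕ) + (q i - e q i)) % q i, Nat.mod_lt _ (hq0 i)⟩) := by
  ext x
  simp only [cyl, Set.mem_preimage, Set.mem_setOf_eq]
  apply forall₂_congr
  intro i _
  rw [Fin.ext_iff, Fin.ext_iff]
  show ((x i : ℕ) + e q i) % q i = (y i : ℕ) ↔ (x i : ℕ) = ((y i : ℕ) + (q i - e q i)) % q i
  have hle := e_le q hq i
  constructor
  · intro h
    rw [← h, key_mod (q i) (x i) (e q i) (x i).isLt hle]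
  · intro h
    rw [h]
    have h2 : q i - (q i - e q i) = e q i := by omega
    have h3 := key_mod (q i) (y i) (q i - e q i) (y i).isLt (Nat.sub_le _ _)
    rwa [h2] at h3

/-- θ preserves μ -/
lemma map_theta (q : ℕ → ℕ) (hq : ∀ n, 2 ≤ q n) (hq0 : ∀ n, 0 < q n)
    (μ : Measure (∀ n, Fin (q n))) [IsProbabilityMeasure μ]
    (hμ : ∀ (n : ℕ) (y : ∀ i, Fin (q i)),
      μ {x | ∀ i < n, x i = y i} = 1 / ∏ i ∈ Finset.range n, (q i : ENNReal)) :
    μ.map (theta q hq0) = μ := by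
  have hmeas := measurable_theta q hq0
  have : IsProbabilityMeasure (μ.map (theta q hq0)) :=
    Measure.isProbabilityMeasure_map hmeas.aemeasurable
  refine ext_of_generate_finite (cylSet q) (pi_eq_generateFrom q hq0) (isPiSystem_cylSet q)
    ?_ (by simp [measure_univ])
  rintro S ⟨n, y, rfl⟩
  rw [Measure.map_apply hmeas (measurableSet_cyl q n y), theta_preimage_cyl q hq hq0 n y]
  exact (hμ n _).trans (hμ n y).symm

/-- goodness of a coordinate: avoids the wraparound value -/
def good (q : ℕ → ℕ) (i : ℕ) (a : Fin (q i)) : Prop :=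
  (a : ℕ) ≠ if Even i then q i - 1 else 0

instance (q : ℕ → ℕ) (i : ℕ) : DecidablePred (good q i) := fun a => by
  unfold good; infer_instance

def B (q : ℕ → ℕ) (n : ℕ) : Set (∀ i, Fin (q i)) := {x | ∀ i < n, good q i (x i)}

def T (q : ℕ → ℕ) (n : ℕ) : Finset (∀ i : Fin n, Fin (q i)) :=
  Fintype.piFinset (fun i : Fin n => Finset.univ.filter (fun a => good q i a))

lemma B_eq_biUnion (q : ℕ → ℕ) (hq0 : ∀ n, 0 < q n) (n : ℕ) :
    B q n = ⋃ t ∈ T q n, cyl q n (extt q hq0 t) := by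
  ext x
  simp only [B, Set.mem_setOf_eq, Set.mem_iUnion, T, Fintype.mem_piFinset, Finset.mem_filter,
    Finset.mem_univ, true_and]
  constructor
  · intro hx
    refine ⟨fun i => x i, fun i => hx i i.isLt, fun i hi => ?_⟩
    simp [cyl, extt, hi]
  · rintro ⟨t, ht, hx⟩ i hi
    have h := hx i hi
    simp only [extt, hi, dif_pos] at h
    rw [h]
    exact ht ⟨i, hi⟩

lemma measure_B (q : ℕ → ℕ) (hq : ∀ n, 2 ≤ q n) (hq0 : ∀ n, 0 < q n)
    (μ : Measure (∀ n, Fin (q n)))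
    (hμ : ∀ (n : ℕ) (y : ∀ i, Fin (q i)),
      μ {x | ∀ i < n, x i = y i} = 1 / ∏ i ∈ Finset.range n, (q i : ENNReal)) (n : ℕ) :
    μ (B q n) = ((∏ i ∈ Finset.range n, (q i - 1) : ℕ) : ENNReal) /
      (∏ i ∈ Finset.range n, (q i : ENNReal)) := by
  rw [B_eq_biUnion q hq0 n]
  rw [measure_biUnion_finset ?_ (fun t _ => measurableSet_cyl q n _)]
  · have hcyl : ∀ t ∈ T q n, μ (cyl q n (extt q hq0 t)) =
        1 / ∏ i ∈ Finset.range n, (q i : ENNReal) := fun t _ => hμ n _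
    rw [Finset.sum_congr rfl hcyl, Finset.sum_const, nsmul_eq_mul]
    have hcard : (T q n).card = ∏ i ∈ Finset.range n, (q i - 1) := by
      rw [T, Fintype.card_piFinset]
      have hc : ∀ i : Fin n, (Finset.univ.filter (fun a => good q i a)).card = q (i : ℕ) - 1 := by
        intro i
        have hb : (if Even (i : ℕ) then q i - 1 else 0) < q i := by
          have := hq (i : ℕ); split <;> omega
        have heq : (Finset.univ.filter (fun a => good q i a)) =
            Finset.univ.erase (⟨if Even (i : ℕ) then q i - 1 else 0, hb⟩ : Fin (q i)) := by
          ext a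
          rw [Finset.mem_filter]
          simp only [Finset.mem_filter, Finset.mem_univ, true_and, Finset.mem_erase, and_true,
            good, Ne, Fin.ext_iff]
        rw [heq, Finset.card_erase_of_mem (Finset.mem_univ _), Finset.card_univ, Fintype.card_fin]
      rw [Finset.prod_congr rfl (fun i _ => hc i)]
      exact Fin.prod_univ_eq_prod_range (fun i => q i - 1) n
    rw [hcard, mul_one_div]
  · intro t ht t' ht' htt'
    simp only [Function.onFun]
    rw [Set.disjoint_left]
    intro x hx hx'
    apply htt'
    funext i
    have h1 : x i.val = extt q hq0 t i.val := hx i.val i.isLt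
    have h2 : x i.val = extt q hq0 t' i.val := hx' i.val i.isLt
    simp only [extt, dif_pos i.isLt] at h1 h2
    exact h1.symm.trans h2

lemma B_antitone (q : ℕ → ℕ) : Antitone (B q) := by
  intro m n hmn x hx i hi
  exact hx i (by omega)

lemma measurableSet_B (q : ℕ → ℕ) (n : ℕ) : MeasurableSet (B q n) := by
  have h : B q n = ⋂ i ∈ Set.Iio n, (fun x : ∀ j, Fin (q j) => x i) ⁻¹' {a | good q i a} := by
    ext x; simp [B]
  rw [h]
  exact MeasurableSet.biInter ((Set.to_countable _))
    (fun i _ => (measurable_pi_apply i) (Set.Finite.measurableSet (Set.toFinite _)))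

/-- the real partial product equals the ENNReal ratio -/
lemma partial_prod_eq (q : ℕ → ℕ) (hq : ∀ n, 2 ≤ q n) (n : ℕ) :
    ENNReal.ofReal (∏ i ∈ Finset.range n, (1 - 1 / (q i : ℝ))) =
      ((∏ i ∈ Finset.range n, (q i - 1) : ℕ) : ENNReal) /
        (∏ i ∈ Finset.range n, (q i : ENNReal)) := by
  have h1 : ∀ i ∈ Finset.range n,
      (1 - 1 / (q i : ℝ)) = ((q i - 1 : ℕ) : ℝ) / ((q i : ℕ) : ℝ) := by
    intro i _
    have h2 := hq i
    have hpos : (0 : ℝ) < (q i : ℝ) := by exact_mod_cast (by omega : 0 < q i)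
    rw [Nat.cast_sub (by omega), Nat.cast_one, sub_div, div_self hpos.ne']
  have hdpos : (0 : ℝ) < ((∏ i ∈ Finset.range n, q i : ℕ) : ℝ) := by
    exact_mod_cast Finset.prod_pos (fun i _ => by have := hq i; omega)
  rw [Finset.prod_congr rfl h1, Finset.prod_div_distrib, ← Nat.cast_prod, ← Nat.cast_prod,
    ENNReal.ofReal_div_of_pos hdpos, ENNReal.ofReal_natCast, ENNReal.ofReal_natCast,
    Nat.cast_prod, Nat.cast_prod]

lemma measure_Y (q : ℕ → ℕ) (hq : ∀ n, 2 ≤ q n) (hq0 : ∀ n, 0 < q n)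
    (μ : Measure (∀ n, Fin (q n))) [IsProbabilityMeasure μ]
    (hμ : ∀ (n : ℕ) (y : ∀ i, Fin (q i)),
      μ {x | ∀ i < n, x i = y i} = 1 / ∏ i ∈ Finset.range n, (q i : ENNReal))
    {L : ℝ} (hL : 0 < L)
    (hT : Filter.Tendsto (fun N => ∏ n ∈ Finset.range N, (1 - 1 / (q n : ℝ)))
      Filter.atTop (nhds L)) :
    ENNReal.ofReal L ≤ μ (⋂ n, B q n) := by
  set P : ℕ → ℝ := fun N => ∏ n ∈ Finset.range N, (1 - 1 / (q n : ℝ)) with hP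
  have hterm : ∀ i, (0 : ℝ) ≤ 1 - 1 / (q i : ℝ) := by
    intro i
    have h2 := hq i
    have hpos : (1 : ℝ) ≤ (q i : ℝ) := by exact_mod_cast (by omega : 1 ≤ q i)
    have := div_le_one_of_le₀ hpos (by linarith)
    linarith
  have hPnn : ∀ N, 0 ≤ P N := fun N => Finset.prod_nonneg fun i _ => hterm i
  have hPanti : Antitone P := by
    apply antitone_nat_of_succ_le
    intro N
    rw [hP]
    simp only [Finset.prod_range_succ]
    calc (∏ n ∈ Finset.range N, (1 - 1 / (q n : ℝ))) * (1 - 1 / (q N : ℝ))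
        ≤ (∏ n ∈ Finset.range N, (1 - 1 / (q n : ℝ))) * 1 := by
          apply mul_le_mul_of_nonneg_left _ (hPnn N)
          have h2 := hq N
          have : (0 : ℝ) ≤ 1 / (q N : ℝ) := by positivity
          linarith
      _ = ∏ n ∈ Finset.range N, (1 - 1 / (q n : ℝ)) := mul_one _
  rw [Antitone.measure_iInter (B_antitone q)
    (fun n => (measurableSet_B q n).nullMeasurableSet) ⟨0, measure_ne_top μ _⟩]
  refine le_iInf fun n => ?_
  rw [measure_B q hq hq0 μ hμ n, ← partial_prod_eq q hq n]
  apply ENNReal.ofReal_le_ofReal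
  exact le_of_tendsto hT (Filter.eventually_atTop.2 ⟨n, fun m hm => hPanti hm⟩)

end Stmt9

open Stmt9 in
/-- If `∏ (1 − 1/q_n)` converges to a nonzero limit, the map
`ψ(x) = (x_n + x_{n+1} mod q_n)_n` is not injective on any set of full measure. -/
theorem stmt9 (q : ℕ → ℕ) (hq : ∀ n, 2 ≤ q n) (hq0 : ∀ n, 0 < q n)
    (μ : Measure (∀ n, Fin (q n))) [IsProbabilityMeasure μ]
    (hμ : ∀ (n : ℕ) (y : ∀ i, Fin (q i)),
      μ {x | ∀ i < n, x i = y i} = 1 / ∏ i ∈ Finset.range n, (q i : ENNReal))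
    (hprod : ∃ L : ℝ, 0 < L ∧ Filter.Tendsto
      (fun N => ∏ n ∈ Finset.range N, (1 - 1 / (q n : ℝ))) Filter.atTop (nhds L)) :
    ¬ ∃ A : Set (∀ n, Fin (q n)), MeasurableSet A ∧ μ A = 1 ∧
      Set.InjOn (psiShift q hq0) A := by
  rintro ⟨A, hA, hA1, hInj⟩
  obtain ⟨L, hL, hT⟩ := hprod
  have hmap := map_theta q hq hq0 μ hμ
  have hAc : μ Aᶜ = 0 := by
    rw [measure_compl hA (measure_ne_top μ A), hA1, measure_univ, tsub_self]
  have hBc : μ (theta q hq0 ⁻¹' Aᶜ) = 0 := by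
    have h : (μ.map (theta q hq0)) Aᶜ = 0 := by rw [hmap]; exact hAc
    rwa [Measure.map_apply (measurable_theta q hq0) hA.compl] at h
  have hN : μ (Aᶜ ∪ theta q hq0 ⁻¹' Aᶜ) = 0 := measure_union_null hAc hBc
  have hY : 0 < μ (⋂ n, B q n) :=
    lt_of_lt_of_le (ENNReal.ofReal_pos.mpr hL) (measure_Y q hq hq0 μ hμ hL hT)
  have hsub : ¬ (⋂ n, B q n) ⊆ (Aᶜ ∪ theta q hq0 ⁻¹' Aᶜ) := by
    intro h
    exact absurd (measure_mono_null h hN) (ne_of_gt hY)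
  obtain ⟨x, hxY, hxN⟩ := Set.not_subset.mp hsub
  have hxA : x ∈ A := by
    by_contra h
    exact hxN (Or.inl h)
  have hθxA : theta q hq0 x ∈ A := by
    by_contra h
    exact hxN (Or.inr h)
  have hgood : ∀ n, (x n : ℕ) ≠ if Even n then q n - 1 else 0 := by
    intro n
    exact (Set.mem_iInter.mp hxY (n + 1)) n (by omega)
  have hcoord : ∀ n, (theta q hq0 x n : ℕ) =
      if Even n then (x n : ℕ) + 1 else (x n : ℕ) - 1 := by
    intro n
    show ((x n : ℕ) + e q n) % q n = _
    have hg := hgood n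
    have hlt := (x n).isLt
    have h2 := hq n
    unfold e
    by_cases hn : Even n
    · rw [if_pos hn] at hg ⊢
      rw [if_pos hn, Nat.mod_eq_of_lt (by omega)]
    · rw [if_neg hn] at hg ⊢
      rw [if_neg hn]
      have h : (x n : ℕ) + (q n - 1) = ((x n : ℕ) - 1) + 1 * q n := by omega
      rw [h, Nat.add_mul_mod_self_right, Nat.mod_eq_of_lt (by omega)]
  have hpsi : psiShift q hq0 (theta q hq0 x) = psiShift q hq0 x := by
    funext n
    apply Fin.ext
    show ((theta q hq0 x n : ℕ) + (theta q hq0 x (n + 1) : ℕ)) % q n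
      = ((x n : ℕ) + (x (n + 1) : ℕ)) % q n
    have hn := hcoord n
    have hn1 := hcoord (n + 1)
    have hg := hgood n
    have hg1 := hgood (n + 1)
    by_cases hev : Even n
    · have hodd : ¬ Even (n + 1) := by simp [Nat.even_add_one, hev]
      rw [if_pos hev] at hn
      rw [if_neg hodd] at hn1
      rw [if_neg hodd] at hg1
      rw [hn, hn1]
      congr 1
      omega
    · have hev1 : Even (n + 1) := Nat.even_add_one.mpr hev
      rw [if_neg hev] at hn hg
      rw [if_pos hev1] at hn1
      rw [hn, hn1]
      congr 1
      omega
  have heq : theta q hq0 x = x := hInj hθxA hxA hpsi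
  have h0 := congrArg (fun z => (z 0 : ℕ)) heq
  have hc0 := hcoord 0
  rw [if_pos (Even.zero)] at hc0
  omega
end

section
/- Let q_n ≥ 2 for all n, X = ∏_{n≥0}{0,…,q_n−1}, and suppose given for each n ≥ 0 a family of permutations σ^{(n)}_i of {0,…,q_n−1} (0 ≤ i < q_{n+1}). Define F_n := {a ∈ {0,…,q_n−1} : σ^{(n)}_i(a) = a for all 0 ≤ i < q_{n+1}}. If the series ∑_n |F_n|/q_n diverges, then the set X₀ = {x ∈ X : x_n ∈ F_n for infinitely many n} has full product measure, and the map ψ(x) = (σ^{(n)}_{x_{n+1}}(x_n))_{n≥0} restricts to a bijection of X₀ onto itself. -/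
open MeasureTheory Filter
set_option maxHeartbeats 1000000


noncomputable def tseq {q : ℕ → ℕ} (σ : ∀ n, Fin (q (n + 1)) → Equiv.Perm (Fin (q n)))
    (z : ∀ n, Fin (q n)) (n k : ℕ) : Fin (q k) :=
  if h : n ≤ k then z k else (σ k (tseq σ z n (k + 1))).symm (z k)
termination_by n - k
decreasing_by omega

lemma tseq_ge {q : ℕ → ℕ} (σ : ∀ n, Fin (q (n + 1)) → Equiv.Perm (Fin (q n)))
    (z : ∀ n, Fin (q n)) {n k : ℕ} (h : n ≤ k) : tseq σ z n k = z k := by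
  rw [tseq, dif_pos h]

lemma tseq_eq_of_lt {q : ℕ → ℕ} (σ : ∀ n, Fin (q (n + 1)) → Equiv.Perm (Fin (q n)))
    (z : ∀ n, Fin (q n)) {n k : ℕ} (h : k < n) :
    tseq σ z n k = (σ k (tseq σ z n (k + 1))).symm (z k) := by
  rw [tseq]
  exact dif_neg (by omega)

lemma tseq_lt {q : ℕ → ℕ} (σ : ∀ n, Fin (q (n + 1)) → Equiv.Perm (Fin (q n)))
    (z : ∀ n, Fin (q n)) {n k : ℕ} (h : k < n) :
    σ k (tseq σ z n (k + 1)) (tseq σ z n k) = z k := by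
  rw [tseq_eq_of_lt σ z h]
  exact (σ k (tseq σ z n (k + 1))).apply_symm_apply (z k)

/-- If `b` is fixed by all permutations and `σ n j a = b` then `a = b`. -/
lemma fix_of_maps_to_fix {q : ℕ → ℕ} (σ : ∀ n, Fin (q (n + 1)) → Equiv.Perm (Fin (q n)))
    {n : ℕ} {a b : Fin (q n)} (hb : ∀ i, σ n i b = b) {j : Fin (q (n + 1))}
    (hab : σ n j a = b) : a = b :=
  (σ n j).injective (by rw [hab, hb j])

lemma tseq_consistent {q : ℕ → ℕ} (σ : ∀ n, Fin (q (n + 1)) → Equiv.Perm (Fin (q n)))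
    (z : ∀ n, Fin (q n)) {n n' : ℕ} (hz : ∀ i, σ n i (z n) = z n) (hnn' : n ≤ n') :
    ∀ k ≤ n, tseq σ z n' k = tseq σ z n k := by
  have hn : tseq σ z n' n = z n := by
    rcases eq_or_lt_of_le hnn' with rfl | hlt
    · exact tseq_ge σ z le_rfl
    · exact fix_of_maps_to_fix σ hz (tseq_lt σ z hlt)
  have key : ∀ d k, k + d = n → tseq σ z n' k = tseq σ z n k := by
    intro d
    induction d with
    | zero => intro k hk; subst hk; simp only [Nat.add_zero] at *
              rw [hn, tseq_ge σ z le_rfl]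
    | succ d ih =>
        intro k hk
        have hk1 : (k + 1) + d = n := by omega
        have hkn : k < n := by omega
        have h1 := ih (k + 1) hk1
        rw [tseq_eq_of_lt σ z (by omega : k < n'), tseq_eq_of_lt σ z hkn, h1]
  intro k hk
  exact key (n - k) k (by omega)

lemma nat_infinite_iff (s : Set ℕ) : s.Infinite ↔ ∀ N, ∃ n, N ≤ n ∧ n ∈ s := by
  constructor
  · intro h N
    by_contra hc
    push_neg at hc
    refine h ((Set.finite_Iio N).subset fun n hn => ?_)
    simp only [Set.mem_Iio]
    by_contra h'
    exact hc n (not_lt.mp h') hn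
  · intro h hfin
    obtain ⟨b, hb⟩ := hfin.bddAbove
    obtain ⟨n, hn, hns⟩ := h (b + 1)
    exact absurd (hb hns) (by omega)


lemma cylinder_measurable {q : ℕ → ℕ} (n : ℕ) (y : ∀ i, Fin (q i)) :
    MeasurableSet {x : ∀ i, Fin (q i) | ∀ i < n, x i = y i} := by
  have : {x : ∀ i, Fin (q i) | ∀ i < n, x i = y i}
      = ⋂ i, ⋂ (_ : i < n), (fun x : ∀ i, Fin (q i) => x i) ⁻¹' {y i} := by
    ext x; simp [Set.mem_iInter]
  rw [this]
  exact MeasurableSet.iInter fun i => MeasurableSet.iInter fun _ =>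
    (measurable_pi_apply i) (measurableSet_singleton _)

lemma cylinder_measure {q : ℕ → ℕ} (hq : ∀ n, 2 ≤ q n)
    (μ : Measure (∀ n, Fin (q n)))
    (hμ : ∀ (n : ℕ) (y : ∀ i, Fin (q i)),
      μ {x | ∀ i < n, x i = y i} = 1 / ∏ i ∈ Finset.range n, (q i : ENNReal))
    (S : ∀ i, Finset (Fin (q i))) (n : ℕ) :
    μ {x | ∀ i < n, x i ∈ S i}
      = (∏ i ∈ Finset.range n, ((S i).card : ENNReal)) / ∏ i ∈ Finset.range n, (q i : ENNReal) := by
  classical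
  have hpos : ∀ i, 0 < q i := fun i => lt_of_lt_of_le two_pos (hq i)
  set P : Finset (∀ i ∈ Finset.range n, Fin (q i)) := (Finset.range n).pi (fun i => S i) with hP
  set ext : (∀ i ∈ Finset.range n, Fin (q i)) → (∀ i, Fin (q i)) :=
    fun g i => if h : i ∈ Finset.range n then g i h else ⟨0, hpos i⟩ with hext
  have hset : {x : ∀ i, Fin (q i) | ∀ i < n, x i ∈ S i}
      = ⋃ g ∈ P, {x | ∀ i < n, x i = ext g i} := by
    ext x
    simp only [Set.mem_setOf_eq, Set.mem_iUnion]
    constructor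
    · intro hx
      refine ⟨fun i _ => x i, ?_, ?_⟩
      · exact Finset.mem_pi.mpr fun i hi => hx i (Finset.mem_range.mp hi)
      · intro i hi
        simp only [hext, dif_pos (Finset.mem_range.mpr hi)]
    · rintro ⟨g, hg, hx⟩
      intro i hi
      rw [hx i hi]
      simp only [hext, dif_pos (Finset.mem_range.mpr hi)]
      exact Finset.mem_pi.mp hg i (Finset.mem_range.mpr hi)
  have hdisj : (↑P : Set _).PairwiseDisjoint
      (fun g => {x : ∀ i, Fin (q i) | ∀ i < n, x i = ext g i}) := by
    intro g hg g' hg' hne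
    refine Set.disjoint_left.mpr fun x hx hx' => hne ?_
    funext i hi
    have h1 := hx i (Finset.mem_range.mp hi)
    have h2 := hx' i (Finset.mem_range.mp hi)
    have : ext g i = ext g' i := by rw [← h1, ← h2]
    simpa only [hext, dif_pos hi] using this
  rw [hset, measure_biUnion_finset hdisj (fun g _ => cylinder_measurable n (ext g))]
  have hcard : P.card = ∏ i ∈ Finset.range n, (S i).card := Finset.card_pi _ _
  calc ∑ g ∈ P, μ {x | ∀ i < n, x i = ext g i}
      = ∑ _g ∈ P, (1 / ∏ i ∈ Finset.range n, (q i : ENNReal)) := by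
        exact Finset.sum_congr rfl fun g _ => hμ n (ext g)
    _ = (P.card : ENNReal) * (1 / ∏ i ∈ Finset.range n, (q i : ENNReal)) := by
        rw [Finset.sum_const, nsmul_eq_mul]
    _ = (∏ i ∈ Finset.range n, ((S i).card : ENNReal)) / ∏ i ∈ Finset.range n, (q i : ENNReal) := by
        rw [hcard, mul_one_div, Nat.cast_prod]

set_option maxHeartbeats 800000

lemma bad_null {q : ℕ → ℕ} (hq : ∀ n, 2 ≤ q n)
    (μ : Measure (∀ n, Fin (q n)))
    (hμ : ∀ (n : ℕ) (y : ∀ i, Fin (q i)),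
      μ {x | ∀ i < n, x i = y i} = 1 / ∏ i ∈ Finset.range n, (q i : ENNReal))
    (F : ∀ n, Finset (Fin (q n)))
    (hdiv : ¬ Summable (fun n => ((F n).card : ℝ) / (q n : ℝ))) (N : ℕ) :
    μ {x | ∀ m, N ≤ m → x m ∉ F m} = 0 := by
  classical
  have hq0 : ∀ i, (0 : ℝ) < (q i : ℝ) := fun i => by
    have := hq i; positivity
  have hcle : ∀ i, (F i).card ≤ q i := fun i => by
    simpa [Fintype.card_fin] using Finset.card_le_univ (F i)
  set p : ℕ → ℝ := fun i => ((F i).card : ℝ) / (q i : ℝ) with hp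
  have hp0 : ∀ i, 0 ≤ p i := fun i => by positivity
  have hp1 : ∀ i, p i ≤ 1 := fun i => by
    rw [hp, div_le_one (hq0 i)]
    exact_mod_cast hcle i
  set p' : ℕ → ℝ := fun i => if N ≤ i then p i else 0 with hp'
  have hp'0 : ∀ i, 0 ≤ p' i := fun i => by
    rw [hp']; dsimp only; split
    · exact hp0 i
    · exact le_rfl
  have hp'1 : ∀ i, p' i ≤ 1 := fun i => by
    rw [hp']; dsimp only; split
    · exact hp1 i
    · norm_num
  set S : ∀ i, Finset (Fin (q i)) := fun i => if N ≤ i then (F i)ᶜ else Finset.univ with hS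
  -- the key bound for each M
  have bound : ∀ M, μ {x | ∀ m, N ≤ m → x m ∉ F m}
      ≤ ENNReal.ofReal (Real.exp (-(∑ i ∈ Finset.range M, p' i))) := by
    intro M
    have hsub : {x : ∀ i, Fin (q i) | ∀ m, N ≤ m → x m ∉ F m}
        ⊆ {x | ∀ i < M, x i ∈ S i} := by
      intro x hx i _
      rw [hS]; dsimp only
      split
      · exact Finset.mem_compl.mpr (hx i (by assumption))
      · exact Finset.mem_univ _
    have h1 := measure_mono (μ := μ) hsub
    rw [cylinder_measure hq μ hμ S M] at h1
    -- rewrite the ENNReal quotient as ofReal of a real product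
    have hratio : ∀ i, ((S i).card : ℝ) / (q i : ℝ) = 1 - p' i := by
      intro i
      rw [hS, hp']; dsimp only
      split
      · rw [Finset.card_compl, Fintype.card_fin, Nat.cast_sub (hcle i), sub_div,
          div_self (ne_of_gt (hq0 i))]
      · rw [Finset.card_univ, Fintype.card_fin, div_self (ne_of_gt (hq0 i)), sub_zero]
    have hAB : (∏ i ∈ Finset.range M, ((S i).card : ENNReal))
        / ∏ i ∈ Finset.range M, (q i : ENNReal)
        = ENNReal.ofReal (∏ i ∈ Finset.range M, (1 - p' i)) := by
      rw [← Nat.cast_prod, ← Nat.cast_prod, ← ENNReal.ofReal_natCast (∏ i ∈ Finset.range M, (S i).card),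
        ← ENNReal.ofReal_natCast (∏ i ∈ Finset.range M, q i),
        ← ENNReal.ofReal_div_of_pos (Nat.cast_pos.mpr (Finset.prod_pos fun i _ => by have := hq i; omega))]
      congr 1
      push_cast
      rw [← Finset.prod_div_distrib]
      exact Finset.prod_congr rfl fun i _ => hratio i
    rw [hAB] at h1
    refine h1.trans (ENNReal.ofReal_le_ofReal ?_)
    calc ∏ i ∈ Finset.range M, (1 - p' i)
        ≤ ∏ i ∈ Finset.range M, Real.exp (-p' i) := by
          refine Finset.prod_le_prod (fun i _ => by linarith [hp'1 i]) (fun i _ => ?_)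
          linarith [Real.add_one_le_exp (-p' i)]
      _ = Real.exp (-(∑ i ∈ Finset.range M, p' i)) := by
          rw [← Real.exp_sum]
          congr 1
          rw [Finset.sum_neg_distrib]
  -- the bound tends to zero
  have hsump : Tendsto (fun M => ∑ i ∈ Finset.range M, p i) atTop atTop :=
    (not_summable_iff_tendsto_nat_atTop_of_nonneg hp0).mp hdiv
  set C : ℝ := ∑ i ∈ Finset.range N, p i with hC
  have hT : ∀ M, (∑ i ∈ Finset.range M, p i) + (-C) ≤ ∑ i ∈ Finset.range M, p' i := by
    intro M
    have hsplit : ∀ i, p i = p' i + (if i < N then p i else 0) := by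
      intro i
      rw [hp']; dsimp only
      rcases le_or_gt N i with h | h
      · rw [if_pos h, if_neg (by omega), add_zero]
      · rw [if_neg (by omega), if_pos h, zero_add]
    have h2 : ∑ i ∈ Finset.range M, (if i < N then p i else 0) ≤ C := by
      rw [Finset.sum_ite, Finset.sum_const, smul_zero, add_zero, hC]
      refine Finset.sum_le_sum_of_subset_of_nonneg ?_ (fun i _ _ => hp0 i)
      intro i hi
      simp only [Finset.mem_filter, Finset.mem_range] at hi ⊢
      exact hi.2
    have h3 : ∑ i ∈ Finset.range M, p i
        = (∑ i ∈ Finset.range M, p' i) + ∑ i ∈ Finset.range M, (if i < N then p i else 0) := by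
      rw [← Finset.sum_add_distrib]
      exact Finset.sum_congr rfl fun i _ => hsplit i
    linarith
  have hTtend : Tendsto (fun M => ∑ i ∈ Finset.range M, p' i) atTop atTop :=
    tendsto_atTop_mono hT (tendsto_atTop_add_const_right atTop (-C) hsump)
  have hexp : Tendsto (fun M => Real.exp (-(∑ i ∈ Finset.range M, p' i))) atTop (nhds 0) :=
    Real.tendsto_exp_atBot.comp (tendsto_neg_atTop_atBot.comp hTtend)
  have hofReal : Tendsto (fun M => ENNReal.ofReal (Real.exp (-(∑ i ∈ Finset.range M, p' i))))
      atTop (nhds 0) := by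
    have := ENNReal.tendsto_ofReal hexp
    simpa [ENNReal.ofReal_zero] using this
  exact le_antisymm (ge_of_tendsto' hofReal bound ) zero_le'


/-- If the permutations `σ^{(n)}_i` have enough common fixed points
(`∑ |F_n|/q_n = ∞`), then the set of points whose coordinates lie in `F_n`
infinitely often has full measure, and `ψ` restricts to a bijection of it. -/
theorem stmt12 (q : ℕ → ℕ) (hq : ∀ n, 2 ≤ q n)
    (μ : Measure (∀ n, Fin (q n))) [IsProbabilityMeasure μ]
    (hμ : ∀ (n : ℕ) (y : ∀ i, Fin (q i)),
      μ {x | ∀ i < n, x i = y i} = 1 / ∏ i ∈ Finset.range n, (q i : ENNReal))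
    (σ : ∀ n, Fin (q (n + 1)) → Equiv.Perm (Fin (q n)))
    (hdiv : ¬ Summable (fun n =>
      ((Finset.univ.filter (fun a : Fin (q n) => ∀ i, σ n i a = a)).card : ℝ) / (q n : ℝ))) :
    μ {x | {n | ∀ i, σ n i (x n) = x n}.Infinite} = 1 ∧
      Set.BijOn (fun (x : ∀ n, Fin (q n)) => fun n => σ n (x (n + 1)) (x n))
        {x | {n | ∀ i, σ n i (x n) = x n}.Infinite}
        {x | {n | ∀ i, σ n i (x n) = x n}.Infinite} := by
  set F : ∀ n, Finset (Fin (q n)) :=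
    fun n => Finset.univ.filter (fun a : Fin (q n) => ∀ i, σ n i a = a) with hF
  have hmemF : ∀ n (a : Fin (q n)), a ∈ F n ↔ ∀ i, σ n i a = a := by
    intro n a; simp [hF, Finset.mem_filter]
  -- Part 1: full measure
  have hnull : ∀ N, μ {x | ∀ m, N ≤ m → x m ∉ F m} = 0 := bad_null hq μ hμ F hdiv
  have hXmeas : MeasurableSet {x : ∀ n, Fin (q n) | {n | ∀ i, σ n i (x n) = x n}.Infinite} := by
    have hXeq : {x : ∀ n, Fin (q n) | {n | ∀ i, σ n i (x n) = x n}.Infinite}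
        = ⋂ N, ⋃ n, ⋃ (_ : N ≤ n), (fun x : ∀ n, Fin (q n) => x n) ⁻¹' {a | ∀ i, σ n i a = a} := by
      ext x
      simp only [Set.mem_setOf_eq, Set.mem_iInter, Set.mem_iUnion, nat_infinite_iff,
        Set.mem_preimage]
      constructor
      · intro h N
        obtain ⟨n, h1, h2⟩ := h N
        exact ⟨n, h1, h2⟩
      · intro h N
        obtain ⟨n, h1, h2⟩ := h N
        exact ⟨n, h1, h2⟩
    rw [hXeq]
    exact MeasurableSet.iInter fun N => MeasurableSet.iUnion fun n =>
      MeasurableSet.iUnion fun _ => (measurable_pi_apply n) .of_discrete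
  have hcompl : {x : ∀ n, Fin (q n) | {n | ∀ i, σ n i (x n) = x n}.Infinite}ᶜ
      ⊆ ⋃ N, {x | ∀ m, N ≤ m → x m ∉ F m} := by
    intro x hx
    simp only [Set.mem_compl_iff, Set.mem_setOf_eq, nat_infinite_iff, not_forall] at hx
    obtain ⟨N, hN⟩ := hx
    rw [not_exists] at hN
    refine Set.mem_iUnion.mpr ⟨N, fun m hm hmem => ?_⟩
    exact hN m ⟨hm, (hmemF m (x m)).mp hmem⟩
  have part1 : μ {x | {n | ∀ i, σ n i (x n) = x n}.Infinite} = 1 :=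
    (prob_compl_eq_zero_iff hXmeas).mp
      (measure_mono_null hcompl (measure_iUnion_null hnull))
  -- Part 2: bijection
  have hψfix : ∀ (x : ∀ n, Fin (q n)) (n : ℕ),
      (∀ i, σ n i (σ n (x (n + 1)) (x n)) = σ n (x (n + 1)) (x n))
        ↔ (∀ i, σ n i (x n) = x n) := by
    intro x n
    constructor
    · intro h
      have hx : x n = σ n (x (n + 1)) (x n) := fix_of_maps_to_fix σ h rfl
      intro i
      have h2 := h i
      rwa [← hx] at h2
    · intro h i
      rw [h (x (n + 1))]
      exact h i
  have hsetψ : ∀ (x : ∀ n, Fin (q n)),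
      {n | ∀ i, σ n i ((fun n => σ n (x (n + 1)) (x n)) n) = (fun n => σ n (x (n + 1)) (x n)) n}
        = {n | ∀ i, σ n i (x n) = x n} :=
    fun x => Set.ext fun n => hψfix x n
  refine ⟨part1, ?_, ?_, ?_⟩
  · -- MapsTo
    intro x hx
    simp only [Set.mem_setOf_eq] at hx ⊢
    rw [hsetψ x]
    exact hx
  · -- InjOn
    intro x hx y hy hxy
    simp only [Set.mem_setOf_eq] at hx hy
    have hxy' : (fun n => σ n (x (n + 1)) (x n)) = (fun n => σ n (y (n + 1)) (y n)) := hxy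
    have hSS : {n | ∀ i, σ n i (x n) = x n} = {n | ∀ i, σ n i (y n) = y n} := by
      rw [← hsetψ x, ← hsetψ y, hxy']
    funext m
    obtain ⟨n, hmn, hnS⟩ := (nat_infinite_iff _).mp hx m
    have hnSy : ∀ i, σ n i (y n) = y n := by
      have := hSS ▸ hnS
      exact this
    have key : ∀ d k, k + d = n → x k = y k := by
      intro d
      induction d with
      | zero =>
        intro k hk
        subst hk
        simp only [Nat.add_zero] at *
        have e1 : σ k (x (k + 1)) (x k) = x k := hnS (x (k + 1))
        have e2 : σ k (y (k + 1)) (y k) = y k := hnSy (y (k + 1))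
        have e3 : σ k (x (k + 1)) (x k) = σ k (y (k + 1)) (y k) := congrFun hxy k
        rw [e1, e2] at e3
        exact e3
      | succ d ih =>
        intro k hk
        have h1 : x (k + 1) = y (k + 1) := ih (k + 1) (by omega)
        have e3 : σ k (x (k + 1)) (x k) = σ k (y (k + 1)) (y k) := congrFun hxy k
        rw [← h1] at e3
        exact (σ k (x (k + 1))).injective e3
    exact key (n - m) m (by omega)
  · -- SurjOn
    intro z hz
    simp only [Set.mem_setOf_eq] at hz
    have hex : ∀ m, ∃ n, (m + 1 ≤ n) ∧ (∀ i, σ n i (z n) = z n) :=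
      fun m => (nat_infinite_iff _).mp hz (m + 1)
    choose N hNgt hNS using hex
    set x : ∀ k, Fin (q k) := fun k => tseq σ z (N k) k with hx
    have hxS : ∀ m, (∀ i, σ m i (z m) = z m) → x m = z m := by
      intro m hm
      rw [hx]
      dsimp only
      rw [tseq_consistent σ z hm (Nat.le_of_succ_le (hNgt m)) m le_rfl, tseq_ge σ z le_rfl]
    have hxmem : x ∈ {x : ∀ n, Fin (q n) | {n | ∀ i, σ n i (x n) = x n}.Infinite} := by
      refine Set.Infinite.mono ?_ hz
      intro m hm
      simp only [Set.mem_setOf_eq] at hm ⊢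
      rw [hxS m hm]
      exact hm
    refine ⟨x, hxmem, ?_⟩
    funext m
    obtain ⟨n, hn1, hn2⟩ := (nat_infinite_iff _).mp hz (max (N m) (N (m + 1)) + 1)
    have hNm : N m < n := lt_of_le_of_lt (le_max_left _ _) (Nat.lt_of_succ_le hn1)
    have hNm1 : N (m + 1) < n := lt_of_le_of_lt (le_max_right _ _) (Nat.lt_of_succ_le hn1)
    have e1 : tseq σ z n m = x m := by
      rw [hx]
      exact tseq_consistent σ z (hNS m) hNm.le m (Nat.le_of_succ_le (hNgt m))
    have e2 : tseq σ z n (m + 1) = x (m + 1) := by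
      rw [hx]
      exact tseq_consistent σ z (hNS (m + 1)) hNm1.le (m + 1) (Nat.le_of_succ_le (hNgt (m + 1)))
    show σ m (x (m + 1)) (x m) = z m
    rw [← e1, ← e2]
    exact tseq_lt σ z (lt_trans (hNgt m) hNm)
end

section
/- Let α > 0 and let ∏_{p prime} p^{k_p} be a supernatural number (k_p ∈ ℕ ∪ {∞}) with k_{p⋆} = ∞ for some prime p⋆. Then there exists a sequence (q_n)_{n≥0} of integers ≥ 2 such that: (1) q_{n+1} ≤ (q_n − 2)! for every n ≥ 0; (2) (log q_n)/(q_0⋯q_{n−1}) → α as n → ∞; (3) for every prime p, ∑_{n≥0} ν_p(q_n) = k_p, where ν_p denotes p-adic valuation. -/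
open Filter

lemma pow_le_exp_mul_factorial (m : ℕ) : (m : ℝ) ^ m ≤ Real.exp m * m.factorial := by
  induction m with
  | zero => simp
  | succ m ih =>
    have hstep : ((m : ℝ) + 1) ^ m ≤ Real.exp 1 * (m : ℝ) ^ m := by
      rcases Nat.eq_zero_or_pos m with rfl | hm
      · simpa using Real.one_le_exp (by norm_num)
      · have hm' : (0 : ℝ) < m := by exact_mod_cast hm
        have h1 : ((m : ℝ) + 1) = m * (1 + 1 / m) := by field_simp
        have h2 : (1 : ℝ) + 1 / m ≤ Real.exp (1 / m) := by
          have := Real.add_one_le_exp (1 / (m:ℝ)); linarith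
        calc ((m : ℝ) + 1) ^ m = (m : ℝ) ^ m * (1 + 1 / m) ^ m := by rw [h1, mul_pow]
          _ ≤ (m : ℝ) ^ m * Real.exp (1 / m) ^ m := by
              gcongr
          _ = (m : ℝ) ^ m * Real.exp 1 := by
              rw [← Real.exp_nat_mul]
              congr 1
              field_simp
          _ = Real.exp 1 * (m : ℝ) ^ m := mul_comm _ _
    have hfac : (0:ℝ) ≤ (m.factorial : ℝ) := by positivity
    calc ((m + 1 : ℕ) : ℝ) ^ (m + 1) = ((m:ℝ) + 1) * ((m:ℝ) + 1) ^ m := by push_cast; ring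
      _ ≤ ((m:ℝ) + 1) * (Real.exp 1 * (m:ℝ)^m) := by gcongr
      _ ≤ ((m:ℝ) + 1) * (Real.exp 1 * (Real.exp m * m.factorial)) := by gcongr
      _ = Real.exp ((m+1 : ℕ)) * ((m+1).factorial : ℝ) := by
          push_cast [Nat.factorial_succ]
          rw [Real.exp_add]
          ring

lemma mul_log_sub_le_log_factorial {m : ℕ} (hm : 1 ≤ m) :
    (m : ℝ) * Real.log m - m ≤ Real.log m.factorial := by
  have h := pow_le_exp_mul_factorial m
  have hm' : (1:ℝ) ≤ (m:ℝ) := by exact_mod_cast hm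
  have hfac : (0:ℝ) < m.factorial := by exact_mod_cast m.factorial_pos
  have hlog := Real.log_le_log (by positivity) h
  rw [Real.log_pow, Real.log_mul (Real.exp_ne_zero _) (ne_of_gt hfac), Real.log_exp] at hlog
  linarith

lemma enat_eq_top_of_forall_le {x : ℕ∞} (h : ∀ n : ℕ, (n : ℕ∞) ≤ x) : x = ⊤ := by
  induction x using ENat.recTopCoe with
  | top => rfl
  | coe m =>
    have := h (m + 1)
    have : m + 1 ≤ m := by exact_mod_cast this
    omega

lemma enat_hasSum (f : ℕ → ℕ∞) : HasSum f (⨆ s : Finset ℕ, ∑ i ∈ s, f i) :=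
  tendsto_atTop_iSup fun _ _ hst => Finset.sum_le_sum_of_subset hst

lemma enat_tsum_eq_top {f : ℕ → ℕ∞} (h : ∀ n, 1 ≤ f n) : ∑' n, f n = ⊤ := by
  rw [(enat_hasSum f).tsum_eq]
  apply enat_eq_top_of_forall_le
  intro N
  refine le_trans ?_ (le_iSup _ (Finset.range N))
  calc (N : ℕ∞) = ∑ _i ∈ Finset.range N, 1 := by simp
    _ ≤ ∑ i ∈ Finset.range N, f i := Finset.sum_le_sum fun i _ => h i

lemma enat_tsum_ite (K : ℕ∞) :
    ∑' j : ℕ, (if (j : ℕ∞) < K then (1:ℕ∞) else 0) = K := by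
  induction K using ENat.recTopCoe with
  | top =>
    apply enat_tsum_eq_top
    intro n
    simp [lt_top_iff_ne_top, ENat.coe_ne_top]
  | coe m =>
    have hz : ∀ j ∉ Finset.range m, (if (j:ℕ∞) < (m:ℕ∞) then (1:ℕ∞) else 0) = 0 := by
      intro j hj
      simp only [Finset.mem_range, not_lt] at hj
      have : ¬ ((j:ℕ∞) < (m:ℕ∞)) := by exact_mod_cast not_lt.2 hj
      simp [this]
    rw [(hasSum_sum_of_ne_finset_zero hz).tsum_eq]
    have : ∀ j ∈ Finset.range m, (if (j:ℕ∞) < (m:ℕ∞) then (1:ℕ∞) else 0) = 1 := by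
      intro j hj
      simp only [Finset.mem_range] at hj
      have : (j:ℕ∞) < (m:ℕ∞) := by exact_mod_cast hj
      simp [this]
    rw [Finset.sum_congr rfl this]
    simp
namespace Stmt13Aux

open Classical in
noncomputable def mfac (pstar : ℕ) (k : ℕ → ℕ∞) (n : ℕ) : ℕ :=
  if (Nat.unpair n).1.Prime ∧ (Nat.unpair n).1 ≠ pstar ∧
      ((Nat.unpair n).2 : ℕ∞) < k (Nat.unpair n).1
  then (Nat.unpair n).1 else 1

noncomputable def cc (pstar : ℕ) (n : ℕ) : ℝ :=
  4 + Real.log pstar + Real.log ((n : ℝ) + 2)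

noncomputable def Qstep (α : ℝ) (pstar : ℕ) (k : ℕ → ℕ∞) (n : ℕ) (x : ℝ) : ℕ :=
  pstar ^ (⌈(α * x + cc pstar n) / Real.log pstar⌉₊ + 1) * mfac pstar k n

noncomputable def Pr (α : ℝ) (pstar : ℕ) (k : ℕ → ℕ∞) : ℕ → ℝ
  | 0 => 1
  | n + 1 => Pr α pstar k n * (Qstep α pstar k n (Pr α pstar k n) : ℝ)

noncomputable def Q (α : ℝ) (pstar : ℕ) (k : ℕ → ℕ∞) (n : ℕ) : ℕ :=
  Qstep α pstar k n (Pr α pstar k n)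

noncomputable def aexp (α : ℝ) (pstar : ℕ) (k : ℕ → ℕ∞) (n : ℕ) : ℕ :=
  ⌈(α * Pr α pstar k n + cc pstar n) / Real.log pstar⌉₊ + 1

variable {α : ℝ} {pstar : ℕ} {k : ℕ → ℕ∞}

lemma Q_eq (n : ℕ) : Q α pstar k n = pstar ^ aexp α pstar k n * mfac pstar k n := rfl

lemma Pr_succ (n : ℕ) : Pr α pstar k (n + 1) = Pr α pstar k n * (Q α pstar k n : ℝ) := rfl

lemma Pr_eq_prod (n : ℕ) : Pr α pstar k n = ∏ i ∈ Finset.range n, (Q α pstar k i : ℝ) := by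
  induction n with
  | zero => simp [Pr]
  | succ n ih => rw [Finset.prod_range_succ, ← ih, Pr_succ]

lemma mfac_pos (n : ℕ) : 0 < mfac pstar k n := by
  unfold mfac; split
  · rename_i h; exact h.1.pos
  · exact one_pos

lemma mfac_le (n : ℕ) : mfac pstar k n ≤ n + 1 := by
  unfold mfac; split
  · exact le_trans (Nat.unpair_left_le n) (Nat.le_succ n)
  · omega

lemma not_dvd_mfac (hp : pstar.Prime) (n : ℕ) : ¬ pstar ∣ mfac pstar k n := by
  unfold mfac; split
  · rename_i h
    intro hdvd
    exact h.2.1 ((Nat.prime_dvd_prime_iff_eq hp h.1).1 hdvd).symm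
  · intro hdvd
    have h1 := Nat.dvd_one.1 hdvd
    have := hp.one_lt
    omega

lemma log_pstar_pos (hp : pstar.Prime) : 0 < Real.log pstar :=
  Real.log_pos (by exact_mod_cast hp.one_lt)

lemma log_two_le_log_pstar (hp : pstar.Prime) : Real.log 2 ≤ Real.log pstar :=
  Real.log_le_log two_pos (by exact_mod_cast hp.two_le)

lemma cc_ge (hp : pstar.Prime) (n : ℕ) : 4 + Real.log pstar + Real.log 2 ≤ cc pstar n := by
  unfold cc
  have : Real.log 2 ≤ Real.log ((n:ℝ) + 2) := Real.log_le_log two_pos (by push_cast; linarith [Nat.cast_nonneg (α := ℝ) n])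
  linarith

lemma cc_pos (hp : pstar.Prime) (n : ℕ) : 0 < cc pstar n := by
  have h1 := log_pstar_pos hp
  have h2 := cc_ge hp n
  have := Real.log_nonneg (by norm_num : (1:ℝ) ≤ 2)
  linarith

lemma two_le_Q (hp : pstar.Prime) (n : ℕ) : 2 ≤ Q α pstar k n := by
  rw [Q_eq]
  calc 2 ≤ pstar := hp.two_le
    _ ≤ pstar ^ aexp α pstar k n := Nat.le_self_pow (by unfold aexp; omega) _
    _ ≤ pstar ^ aexp α pstar k n * mfac pstar k n :=
        Nat.le_mul_of_pos_right _ (mfac_pos n)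

lemma Pr_pos (hp : pstar.Prime) (n : ℕ) : 0 < Pr α pstar k n := by
  induction n with
  | zero => norm_num [Pr]
  | succ n ih =>
    rw [Pr_succ]
    have : (0:ℝ) < (Q α pstar k n : ℝ) := by
      exact_mod_cast lt_of_lt_of_le two_pos (two_le_Q hp n)
    exact mul_pos ih this

lemma Pr_ge_pow (hp : pstar.Prime) (n : ℕ) : (2:ℝ) ^ n ≤ Pr α pstar k n := by
  induction n with
  | zero => norm_num [Pr]
  | succ n ih =>
    rw [Pr_succ, pow_succ]
    have h2 : (2:ℝ) ≤ (Q α pstar k n : ℝ) := by exact_mod_cast two_le_Q hp n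
    have := Pr_pos (α := α) (k := k) hp n
    nlinarith [pow_pos (show (0:ℝ) < 2 by norm_num) n]

lemma Pr_ge_one (hp : pstar.Prime) (n : ℕ) : 1 ≤ Pr α pstar k n :=
  le_trans (one_le_pow₀ (by norm_num)) (Pr_ge_pow hp n)

lemma log_Q_eq (hp : pstar.Prime) (n : ℕ) :
    Real.log (Q α pstar k n) =
      (aexp α pstar k n : ℝ) * Real.log pstar + Real.log (mfac pstar k n) := by
  have hpp : (0:ℝ) < (pstar:ℝ) := by exact_mod_cast hp.pos
  have hm : (0:ℝ) < (mfac pstar k n : ℝ) := by exact_mod_cast mfac_pos n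
  have : ((Q α pstar k n : ℕ) : ℝ) = (pstar:ℝ) ^ aexp α pstar k n * (mfac pstar k n : ℝ) := by
    rw [Q_eq]; push_cast; ring
  rw [this, Real.log_mul (by positivity) (ne_of_gt hm), Real.log_pow]

lemma log_Q_lower (hα : 0 < α) (hp : pstar.Prime) (n : ℕ) :
    α * Pr α pstar k n + cc pstar n + Real.log pstar ≤ Real.log (Q α pstar k n) := by
  have hlp := log_pstar_pos hp
  have hy : (α * Pr α pstar k n + cc pstar n) / Real.log pstar ≤
      (⌈(α * Pr α pstar k n + cc pstar n) / Real.log pstar⌉₊ : ℝ) := Nat.le_ceil _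
  have ha : ((α * Pr α pstar k n + cc pstar n) / Real.log pstar + 1) ≤ (aexp α pstar k n : ℝ) := by
    unfold aexp; push_cast; linarith
  have hlogm : 0 ≤ Real.log (mfac pstar k n) :=
    Real.log_natCast_nonneg _
  rw [log_Q_eq hp]
  have := mul_le_mul_of_nonneg_right ha hlp.le
  rw [add_mul, div_mul_cancel₀ _ (ne_of_gt hlp), one_mul] at this
  linarith

lemma log_Q_upper (hα : 0 < α) (hp : pstar.Prime) (n : ℕ) :
    Real.log (Q α pstar k n) ≤
      α * Pr α pstar k n + cc pstar n + 2 * Real.log pstar + Real.log ((n:ℝ) + 1) := by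
  have hlp := log_pstar_pos hp
  have hx : 0 < α * Pr α pstar k n + cc pstar n :=
    add_pos (mul_pos hα (Pr_pos hp n)) (cc_pos hp n)
  have hceil : (⌈(α * Pr α pstar k n + cc pstar n) / Real.log pstar⌉₊ : ℝ) <
      (α * Pr α pstar k n + cc pstar n) / Real.log pstar + 1 :=
    Nat.ceil_lt_add_one (by positivity)
  have ha : (aexp α pstar k n : ℝ) ≤ (α * Pr α pstar k n + cc pstar n) / Real.log pstar + 2 := by
    unfold aexp; push_cast; linarith
  have hlogm : Real.log (mfac pstar k n) ≤ Real.log ((n:ℝ) + 1) := by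
    have h1 : (0:ℝ) < (mfac pstar k n : ℝ) := by exact_mod_cast mfac_pos n
    have h2 : (mfac pstar k n : ℝ) ≤ (n:ℝ) + 1 := by exact_mod_cast mfac_le n
    exact Real.log_le_log h1 h2
  rw [log_Q_eq hp]
  have := mul_le_mul_of_nonneg_right ha hlp.le
  rw [add_mul, div_mul_cancel₀ _ (ne_of_gt hlp)] at this
  linarith

lemma log_Q_ge_six (hα : 0 < α) (hp : pstar.Prime) (n : ℕ) :
    6 ≤ Real.log (Q α pstar k n) := by
  have h := log_Q_lower (k := k) hα hp n
  have h2 := cc_ge hp n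
  have h3 := log_two_le_log_pstar hp
  have h4 := Real.log_two_gt_d9
  have h5 : 0 < α * Pr α pstar k n := mul_pos hα (Pr_pos hp n)
  linarith

lemma seven_le_Q (hα : 0 < α) (hp : pstar.Prime) (n : ℕ) : (7:ℝ) ≤ (Q α pstar k n : ℝ) := by
  have hq0 : (0:ℝ) < (Q α pstar k n : ℝ) := by
    exact_mod_cast lt_of_lt_of_le two_pos (two_le_Q hp n)
  have h1 : Real.exp 6 ≤ (Q α pstar k n : ℝ) := by
    rw [← Real.exp_log hq0]
    exact Real.exp_le_exp.2 (log_Q_ge_six hα hp n)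
  have h2 : (7:ℝ) ≤ Real.exp 6 := by
    have := Real.add_one_le_exp (6:ℝ); linarith
  linarith


lemma mul_log_sub_le_log_factorial' {m : ℕ} (hm : 1 ≤ m) :
    (m : ℝ) * Real.log m - m ≤ Real.log m.factorial := by
  have h : (m : ℝ) ^ m ≤ Real.exp m * m.factorial := by
    induction m with
    | zero => simp
    | succ m ih =>
      have hstep : ((m : ℝ) + 1) ^ m ≤ Real.exp 1 * (m : ℝ) ^ m := by
        rcases Nat.eq_zero_or_pos m with rfl | hm'
        · simpa using Real.one_le_exp (by norm_num)
        · have hm2 : (0 : ℝ) < m := by exact_mod_cast hm'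
          have h1 : ((m : ℝ) + 1) = m * (1 + 1 / m) := by field_simp
          have h2 : (1 : ℝ) + 1 / m ≤ Real.exp (1 / m) := by
            have := Real.add_one_le_exp (1 / (m:ℝ)); linarith
          calc ((m : ℝ) + 1) ^ m = (m : ℝ) ^ m * (1 + 1 / m) ^ m := by rw [h1, mul_pow]
            _ ≤ (m : ℝ) ^ m * Real.exp (1 / m) ^ m := by gcongr
            _ = (m : ℝ) ^ m * Real.exp 1 := by
                rw [← Real.exp_nat_mul]; congr 1; field_simp
            _ = Real.exp 1 * (m : ℝ) ^ m := mul_comm _ _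
      have ih' : (m : ℝ) ^ m ≤ Real.exp m * m.factorial := by
        rcases Nat.eq_zero_or_pos m with rfl | hm'
        · simp
        · exact ih hm'
      calc ((m + 1 : ℕ) : ℝ) ^ (m + 1) = ((m:ℝ) + 1) * ((m:ℝ) + 1) ^ m := by push_cast; ring
        _ ≤ ((m:ℝ) + 1) * (Real.exp 1 * (m:ℝ)^m) := by gcongr
        _ ≤ ((m:ℝ) + 1) * (Real.exp 1 * (Real.exp m * m.factorial)) := by gcongr
        _ = Real.exp ((m+1 : ℕ)) * ((m+1).factorial : ℝ) := by
            push_cast [Nat.factorial_succ]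
            rw [Real.exp_add]
            ring
  have hm' : (1:ℝ) ≤ (m:ℝ) := by exact_mod_cast hm
  have hfac : (0:ℝ) < m.factorial := by exact_mod_cast m.factorial_pos
  have hlog := Real.log_le_log (by positivity) h
  rw [Real.log_pow, Real.log_mul (Real.exp_ne_zero _) (ne_of_gt hfac), Real.log_exp] at hlog
  linarith

lemma key_fact (hα : 0 < α) (hp : pstar.Prime) (n : ℕ) :
    Q α pstar k (n + 1) ≤ Nat.factorial (Q α pstar k n - 2) := by
  have hq7R : (7:ℝ) ≤ (Q α pstar k n : ℝ) := seven_le_Q hα hp n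
  have hq7 : 7 ≤ Q α pstar k n := by exact_mod_cast hq7R
  set q : ℝ := (Q α pstar k n : ℝ) with hqdef
  have hq0 : (0:ℝ) < q := by linarith
  have hcast : ((Q α pstar k n - 2 : ℕ) : ℝ) = q - 2 := by
    rw [Nat.cast_sub (by omega)]; norm_num; rfl
  have hup := log_Q_upper (k := k) hα hp (n + 1)
  have hlow := log_Q_lower (k := k) hα hp n
  have hL6 : 6 ≤ Real.log q := log_Q_ge_six hα hp n
  have hLq : Real.log q ≤ q - 1 := Real.log_le_sub_one_of_pos hq0
  have hP0 : 0 ≤ Real.log pstar := (log_pstar_pos hp).le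
  have hn0 : (0:ℝ) ≤ (n:ℝ) := Nat.cast_nonneg n
  have hN0 : 0 ≤ Real.log ((n:ℝ)+2) := Real.log_nonneg (by linarith)
  have hN3 : Real.log ((n:ℝ)+3) ≤ 2 * Real.log ((n:ℝ)+2) := by
    have hle : ((n:ℝ)+3) ≤ ((n:ℝ)+2)^2 := by nlinarith
    have h2 := Real.log_le_log (by positivity) hle
    rw [Real.log_pow] at h2
    push_cast at h2
    linarith
  have hA : α * Pr α pstar k (n+1) ≤ (Real.log q - cc pstar n - Real.log pstar) * q := by
    rw [Pr_succ, ← mul_assoc]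
    exact mul_le_mul_of_nonneg_right (by linarith) hq0.le
  have hcn : cc pstar n = 4 + Real.log pstar + Real.log ((n:ℝ)+2) := rfl
  have hcn1 : cc pstar (n+1) = 4 + Real.log pstar + Real.log ((n:ℝ)+3) := by
    unfold cc; push_cast; ring_nf
  have hl2 : Real.log q - 1 ≤ Real.log (q - 2) := by
    have he : (2.7:ℝ) ≤ Real.exp 1 := by have := Real.exp_one_gt_d9; linarith
    have h1 : q ≤ (q - 2) * Real.exp 1 := by
      nlinarith [mul_nonneg (by linarith : (0:ℝ) ≤ q - 7) (by linarith : (0:ℝ) ≤ Real.exp 1 - 1)]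
    have h2 := Real.log_le_log hq0 h1
    rw [Real.log_mul (by linarith) (Real.exp_ne_zero 1), Real.log_exp] at h2
    linarith
  have hfacb : (q-2) * Real.log (q-2) - (q-2) ≤ Real.log ((Q α pstar k n - 2).factorial) := by
    have h := mul_log_sub_le_log_factorial' (m := Q α pstar k n - 2) (by omega)
    rwa [hcast] at h
  have hmono : (q-2) * (Real.log q - 1) ≤ (q-2) * Real.log (q-2) :=
    mul_le_mul_of_nonneg_left hl2 (by linarith)
  have hmain : Real.log (Q α pstar k (n+1)) ≤ Real.log ((Q α pstar k n - 2).factorial) := by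
    have harg : ((n:ℝ) + 1) + 1 = (n:ℝ) + 2 := by ring
    push_cast at hup
    rw [harg] at hup
    have e1 : Real.log (Q α pstar k (n+1)) ≤
        (Real.log q - cc pstar n - Real.log pstar) * q + cc pstar (n+1)
          + 2*Real.log pstar + Real.log ((n:ℝ)+2) := by linarith
    have e2 : (Real.log q - cc pstar n - Real.log pstar) * q + cc pstar (n+1)
          + 2*Real.log pstar + Real.log ((n:ℝ)+2) ≤ (q-2) * (Real.log q - 1) - (q - 2) := by
      rw [hcn, hcn1]
      nlinarith [mul_nonneg hP0 (by linarith : (0:ℝ) ≤ 2*q - 3),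
        mul_nonneg hN0 (by linarith : (0:ℝ) ≤ q - 3)]
    linarith
  have h1 : (0:ℝ) < (Q α pstar k (n+1) : ℝ) := by
    exact_mod_cast lt_of_lt_of_le two_pos (two_le_Q hp (n+1))
  have h2 : (0:ℝ) < ((Q α pstar k n - 2).factorial : ℝ) := by
    exact_mod_cast (Q α pstar k n - 2).factorial_pos
  have := (Real.log_le_log_iff h1 h2).1 hmain
  exact_mod_cast this


lemma tendsto_ratio (hα : 0 < α) (hp : pstar.Prime) :
    Filter.Tendsto (fun n => Real.log (Q α pstar k n) / Pr α pstar k n)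
      Filter.atTop (nhds α) := by
  have key : Filter.Tendsto
      (fun n => Real.log (Q α pstar k n) / Pr α pstar k n - α) Filter.atTop (nhds 0) := by
    apply squeeze_zero_norm
      (a := fun n : ℕ => (7 + 3*Real.log pstar) * (1/2:ℝ)^n + 2 * ((n:ℝ) * (1/2:ℝ)^n))
    · intro n
      have hPr := Pr_pos (α := α) (k := k) hp n
      have hPr2 := Pr_ge_pow (α := α) (k := k) hp n
      have hlow := log_Q_lower (k := k) hα hp n
      have hup := log_Q_upper (k := k) hα hp n
      have hP0 := (log_pstar_pos hp).le
      have hc := cc_pos hp n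
      have hn0 : (0:ℝ) ≤ (n:ℝ) := Nat.cast_nonneg n
      have hN1 : Real.log ((n:ℝ)+1) ≤ (n:ℝ) := by
        have := Real.log_le_sub_one_of_pos (show (0:ℝ) < (n:ℝ)+1 by positivity); linarith
      have hN2 : Real.log ((n:ℝ)+2) ≤ (n:ℝ) + 1 := by
        have := Real.log_le_sub_one_of_pos (show (0:ℝ) < (n:ℝ)+2 by positivity); linarith
      have hD0 : 0 ≤ Real.log (Q α pstar k n) - α * Pr α pstar k n := by
        have := log_pstar_pos hp; linarith
      have heq : Real.log (Q α pstar k n) / Pr α pstar k n - α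
          = (Real.log (Q α pstar k n) - α * Pr α pstar k n) / Pr α pstar k n := by
        field_simp
      rw [heq, Real.norm_eq_abs, abs_of_nonneg (div_nonneg hD0 hPr.le)]
      have hnum : Real.log (Q α pstar k n) - α * Pr α pstar k n
          ≤ (7 + 3*Real.log pstar) + 2*(n:ℝ) := by
        have hcc : cc pstar n = 4 + Real.log pstar + Real.log ((n:ℝ)+2) := rfl
        rw [hcc] at hup
        linarith
      have hdiv : (Real.log (Q α pstar k n) - α * Pr α pstar k n) / Pr α pstar k n
          ≤ ((7 + 3*Real.log pstar) + 2*(n:ℝ)) / (2:ℝ)^n :=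
        div_le_div₀ (by positivity) hnum (by positivity) hPr2
      refine hdiv.trans (le_of_eq ?_)
      have h2n : (0:ℝ) < (2:ℝ)^n := by positivity
      rw [div_pow, one_pow]
      field_simp
    · have t1 : Filter.Tendsto (fun n : ℕ => ((1:ℝ)/2)^n) Filter.atTop (nhds 0) :=
        tendsto_pow_atTop_nhds_zero_of_lt_one (by norm_num) (by norm_num)
      have t2 : Filter.Tendsto (fun n : ℕ => (n:ℝ) * ((1:ℝ)/2)^n) Filter.atTop (nhds 0) :=
        tendsto_self_mul_const_pow_of_lt_one (by norm_num) (by norm_num)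
      have := (t1.const_mul (7 + 3*Real.log pstar)).add (t2.const_mul 2)
      simpa using this
  have h2 := key.add (tendsto_const_nhds (x := α))
  simpa using h2

lemma factorization_Q_eq (hp : pstar.Prime) {p : ℕ} (hpp : p.Prime) (hne : p ≠ pstar) (n : ℕ) :
    (Q α pstar k n).factorization p =
      if ((Nat.unpair n).1 = p ∧ ((Nat.unpair n).2 : ℕ∞) < k p) then 1 else 0 := by
  have hppos : pstar ^ aexp α pstar k n ≠ 0 := pow_ne_zero _ hp.pos.ne'
  have hmpos : mfac pstar k n ≠ 0 := (mfac_pos n).ne'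
  rw [Q_eq, Nat.factorization_mul hppos hmpos, Finsupp.add_apply]
  have h1 : (pstar ^ aexp α pstar k n).factorization p = 0 := by
    rw [hp.factorization_pow, Finsupp.single_apply, if_neg (fun h => hne h.symm)]
  rw [h1, zero_add]
  unfold mfac
  split
  · rename_i h
    rw [h.1.factorization, Finsupp.single_apply]
    by_cases hup : (Nat.unpair n).1 = p
    · have h22 : ((Nat.unpair n).2 : ℕ∞) < k p := hup ▸ h.2.2
      rw [if_pos hup, if_pos ⟨hup, h22⟩]
    · rw [if_neg hup, if_neg (fun hc => hup hc.1)]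
  · rename_i h
    rw [Nat.factorization_one]
    simp only [Finsupp.coe_zero, Pi.zero_apply]
    rw [if_neg]
    rintro ⟨hc1, hc2⟩
    rw [hc1] at h
    exact h ⟨hpp, hne, hc2⟩

lemma tsum_factorization_ne (hp : pstar.Prime) {p : ℕ} (hpp : p.Prime) (hne : p ≠ pstar) :
    ∑' n : ℕ, (((Q α pstar k n).factorization p : ℕ∞)) = k p := by
  have hterm : ∀ n : ℕ, (((Q α pstar k n).factorization p : ℕ∞))
      = (fun n => if ((Nat.unpair n).1 = p ∧ ((Nat.unpair n).2 : ℕ∞) < k p)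
          then (1:ℕ∞) else 0) n := by
    intro n
    rw [factorization_Q_eq hp hpp hne n]
    split_ifs with hcond <;> simp [hcond]
  rw [tsum_congr hterm]
  have hinj : Function.Injective (fun j : ℕ => Nat.pair p j) := by
    intro a b hab
    have := congrArg Nat.unpair hab
    simpa [Nat.unpair_pair] using this
  have hsupp : Function.support (fun n => if ((Nat.unpair n).1 = p ∧
      ((Nat.unpair n).2 : ℕ∞) < k p) then (1:ℕ∞) else 0)
      ⊆ Set.range (fun j : ℕ => Nat.pair p j) := by
    intro n hn
    simp only [Function.mem_support] at hn
    by_cases hc : ((Nat.unpair n).1 = p ∧ ((Nat.unpair n).2 : ℕ∞) < k p)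
    · exact ⟨(Nat.unpair n).2, by simp only [← hc.1, Nat.pair_unpair]⟩
    · simp [hc] at hn
  rw [← hinj.tsum_eq hsupp]
  have hre : ∀ j : ℕ, (if ((Nat.unpair (Nat.pair p j)).1 = p ∧
      ((Nat.unpair (Nat.pair p j)).2 : ℕ∞) < k p) then (1:ℕ∞) else 0)
      = (if ((j:ℕ∞) < k p) then (1:ℕ∞) else 0) := by
    intro j; simp [Nat.unpair_pair]
  calc ∑' (c : ℕ), (fun n => if (Nat.unpair n).1 = p ∧ ((Nat.unpair n).2 : ℕ∞) < k p
          then (1:ℕ∞) else 0) ((fun j : ℕ => Nat.pair p j) c)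
      = ∑' j : ℕ, (if ((j:ℕ∞) < k p) then (1:ℕ∞) else 0) := tsum_congr hre
    _ = k p := enat_tsum_ite (k p)

lemma tsum_factorization_star (hp : pstar.Prime) :
    ∑' n : ℕ, (((Q α pstar k n).factorization pstar : ℕ∞)) = ⊤ := by
  apply enat_tsum_eq_top
  intro n
  have hQ0 : Q α pstar k n ≠ 0 := by have := two_le_Q (α := α) (k := k) hp n; omega
  have hdvd : pstar ∣ Q α pstar k n := by
    rw [Q_eq]
    exact Dvd.dvd.mul_right (dvd_pow_self pstar (by unfold aexp; omega)) _
  have h := Nat.Prime.factorization_pos_of_dvd hp hQ0 hdvd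
  have h1 : 1 ≤ (Q α pstar k n).factorization pstar := h
  exact_mod_cast h1

end Stmt13Aux


open Stmt13Aux in
/-- Given `α > 0` and a supernatural number `∏ p^{k_p}` with `k_{p⋆} = ∞` for some
prime `p⋆`, there is a sequence `(q_n)` of integers ≥ 2 with `q_{n+1} ≤ (q_n−2)!`,
`(log q_n)/(q_0⋯q_{n−1}) → α`, and `∑_n ν_p(q_n) = k_p` for every prime `p`. -/
theorem stmt13 (α : ℝ) (hα : 0 < α) (k : ℕ → ℕ∞)
    (hstar : ∃ p : ℕ, p.Prime ∧ k p = ⊤) :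
    ∃ q : ℕ → ℕ, (∀ n, 2 ≤ q n) ∧
      (∀ n, q (n + 1) ≤ Nat.factorial (q n - 2)) ∧
      Tendsto (fun n => Real.log (q n) / ∏ i ∈ Finset.range n, (q i : ℝ))
        atTop (nhds α) ∧
      ∀ p : ℕ, p.Prime → ∑' n : ℕ, (((q n).factorization p : ℕ∞)) = k p := by
  obtain ⟨pstar, hp, hkstar⟩ := hstar
  refine ⟨Q α pstar k, fun n => two_le_Q hp n, fun n => key_fact hα hp n, ?_, ?_⟩
  · have h := tendsto_ratio (α := α) (pstar := pstar) (k := k) hα hp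
    have heq : (fun n => Real.log (Q α pstar k n) / ∏ i ∈ Finset.range n, (Q α pstar k i : ℝ))
        = fun n => Real.log (Q α pstar k n) / Pr α pstar k n := by
      funext n; rw [Pr_eq_prod]
    rw [heq]
    exact h
  · intro p hpp
    by_cases hne : p = pstar
    · subst hne
      rw [tsum_factorization_star hp, hkstar]
    · exact tsum_factorization_ne hp hpp hne
end

section
/- Define sequences by q̃_n = 2^{n+10}, q_n = (q̃_n)^{2q̃_{n+1}+3}, h_0 = 1, h_{n+1} = q_n h_n, and write h_n = 2^{S_n}. Then S_n = ∑_{i=1}^{n}(i+9)(2^{i+11}+3), and for every real p with 0 < p < 1/2, the series ∑_n (h_n)^p / h_{n−1} converges. -/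
/-- Growth estimate in Feldman's construction: with `q̃_n = 2^{n+10}`,
`q_n = q̃_n^{2q̃_{n+1}+3}` and `h_{n+1} = q_n h_n`, one has `h_n = 2^{S_n}` with
`S_n = ∑_{i=1}^n (i+9)(2^{i+11}+3)`, and `∑ (h_n)^p / h_{n−1} < ∞` for `0 < p < 1/2`. -/
theorem stmt15 (qt q h : ℕ → ℕ) (S : ℕ → ℕ)
    (hqt : ∀ n, qt n = 2 ^ (n + 10))
    (hq : ∀ n, q n = qt n ^ (2 * qt (n + 1) + 3))
    (h0 : h 0 = 1) (hrec : ∀ n, h (n + 1) = q n * h n)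
    (hSdef : ∀ n, S n = ∑ i ∈ Finset.Icc 1 n, (i + 9) * (2 ^ (i + 11) + 3)) :
    (∀ n, h n = 2 ^ S n) ∧
      ∀ p : ℝ, 0 < p → p < 1 / 2 →
        Summable (fun n => ((h (n + 1) : ℝ)) ^ p / (h n : ℝ)) := by
  have hS : ∀ n, S (n+1) = S n + (n+10) * (2 ^ (n+12) + 3) := by
    intro n
    rw [hSdef, hSdef, Finset.sum_Icc_succ_top (by omega)]
  have hh : ∀ n, h n = 2 ^ S n := by
    intro n
    induction n with
    | zero => simp [h0, hSdef]
    | succ n ih =>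
      rw [hrec, ih, hq, hqt, hqt, hS, ← pow_mul, ← pow_add]
      congr 1
      ring
  refine ⟨hh, fun p hp0 hp2 => ?_⟩
  have hF : ∀ n, 2 * S n + 2^16 = (n+8) * 2^(n+13) + 3*n*(n+19) := by
    intro n
    induction n with
    | zero => simp [hSdef]
    | succ n ih =>
      calc 2 * S (n+1) + 2^16 = (2*S n + 2^16) + 2*((n+10)*(2^(n+12)+3)) := by
            rw [hS]; ring
      _ = (n+8)*2^(n+13)+3*n*(n+19) + 2*((n+10)*(2^(n+12)+3)) := by rw [ih]
      _ = (n+1+8)*2^(n+1+13)+3*(n+1)*(n+1+19) := by ring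
  -- key exponential inequality
  have key : ∃ N : ℕ, ∀ n ≥ N, p * (S (n+1) : ℝ) ≤ (S n : ℝ) - n := by
    set δ : ℝ := 1 - 2*p with hδ
    have hδ0 : 0 < δ := by simp [hδ]; linarith
    obtain ⟨N₀, hN₀⟩ := exists_nat_ge (3/δ)
    refine ⟨N₀ + 4, fun n hn => ?_⟩
    have hn4 : (4:ℕ) ≤ n := by omega
    have hFr : 2 * (S n : ℝ) + 2^16 = ((n:ℝ)+8) * 2^(n+13) + 3*n*(n+19) := by
      exact_mod_cast hF n
    have hSr : (S (n+1) : ℝ) = (S n : ℝ) + ((n:ℝ)+10) * (2 ^ (n+12) + 3) := by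
      exact_mod_cast hS n
    set x : ℝ := 2^(n+10) with hx
    have hx0 : (0:ℝ) ≤ x := by positivity
    have e13 : (2:ℝ)^(n+13) = 8 * x := by rw [hx]; ring
    have e12 : (2:ℝ)^(n+12) = 4 * x := by rw [hx]; ring
    have hlb : ((n:ℝ)+8) * (4*x) - 2^15 ≤ (S n : ℝ) := by
      nlinarith [mul_nonneg (by positivity : (0:ℝ) ≤ 3*(n:ℝ)) (by positivity : (0:ℝ) ≤ (n:ℝ)+19)]
    have hdn : 3 ≤ δ * ((n:ℝ)+10) := by
      have h1 : (N₀:ℝ) ≤ (n:ℝ)+10 := by exact_mod_cast Nat.le_of_lt_succ (by omega)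
      have := (div_le_iff₀ hδ0).mp (hN₀.trans h1)
      linarith [this]
    have hdnx : 3 * x ≤ δ * ((n:ℝ)+10) * x := mul_le_mul_of_nonneg_right hdn hx0
    have hpow14 : (2:ℝ)^14 ≤ x := by
      rw [hx]; apply pow_le_pow_right₀ (by norm_num); omega
    have hpown : 1024 * (n:ℝ) ≤ x := by
      have h1 : (n:ℝ) < 2^n := by exact_mod_cast (Nat.lt_two_pow_self (n := n))
      have h2 : x = 1024 * 2^n := by rw [hx]; ring
      nlinarith
    rw [hSr, e12]
    have key' : p * (((n:ℝ)+10) * (4*x + 3)) + (n:ℝ) ≤ (S n : ℝ) / 2 := by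
      have hp' : p = (1 - δ)/2 := by rw [hδ]; ring
      rw [hp']
      nlinarith [hdnx, hdn, hpow14, hpown, hlb, (Nat.cast_nonneg n : (0:ℝ) ≤ n)]
    nlinarith [key', mul_nonneg (by linarith : (0:ℝ) ≤ 1/2 - p) (Nat.cast_nonneg (S n) : (0:ℝ) ≤ S n)]
  obtain ⟨N, hN⟩ := key
  -- rewrite f n as a rpow
  have hf : ∀ n, ((h (n + 1) : ℝ)) ^ p / (h n : ℝ)
      = (2:ℝ) ^ (p * (S (n+1) : ℝ) - (S n : ℝ)) := by
    intro n
    rw [hh (n+1), hh n]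
    push_cast
    rw [← Real.rpow_natCast (2:ℝ) (S (n+1)), ← Real.rpow_natCast (2:ℝ) (S n),
      ← Real.rpow_mul (by norm_num), Real.rpow_sub (by norm_num), mul_comm]
  -- bound for n ≥ N
  have hbound : ∀ n ≥ N, ((h (n + 1) : ℝ)) ^ p / (h n : ℝ) ≤ (1/2)^n := by
    intro n hn
    rw [hf n]
    have h1 : p * (S (n+1) : ℝ) - (S n : ℝ) ≤ -(n:ℝ) := by
      have := hN n hn; linarith
    calc (2:ℝ) ^ (p * (S (n+1) : ℝ) - (S n : ℝ)) ≤ (2:ℝ) ^ (-(n:ℝ)) :=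
          Real.rpow_le_rpow_of_exponent_le (by norm_num) h1
    _ = (1/2)^n := by
        rw [Real.rpow_neg (by norm_num), Real.rpow_natCast]
        simp [one_div, inv_pow]
  rw [← summable_nat_add_iff N]
  apply Summable.of_nonneg_of_le (fun n => by positivity)
    (fun n => hbound (n + N) (by omega))
  have hgeo : Summable (fun n : ℕ => ((1:ℝ)/2)^n) :=
    summable_geometric_of_lt_one (by norm_num) (by norm_num)
  apply Summable.of_nonneg_of_le (fun n => by positivity) (fun n => ?_) hgeo
  exact pow_le_pow_of_le_one (by norm_num) (by norm_num) (by omega)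
end

section
/- Let X = ∏_{n≥0}{0,…,q_n−1} with q_n ≥ 2, let S be the odometer on X, and let T be the odomutant associated to families of permutations σ^{(n)}_i of {0,…,q_n−1} (0 ≤ i < q_{n+1}) all of which fix 0 and q_n − 1. Then T extends uniquely to a homeomorphism of X, T has the same orbits as S at every point of X, and the associated cocycles c_S, c_T : X → ℤ are continuous on X \ {x⁺}, where x⁺ = (q_0−1, q_1−1, …). In particular S and T are strongly orbit equivalent. -/
noncomputable section

/-- The finite distortion `ψ_n`, applying `σ^{(k)}_{x_{k+1}}` to the `k`-th
coordinate for `k ≤ n`. -/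
def psiN (q : ℕ → ℕ) (σ : ∀ n, Fin (q (n + 1)) → Equiv.Perm (Fin (q n))) (n : ℕ)
    (x : ∀ k, Fin (q k)) : ∀ k, Fin (q k) :=
  fun k => if k ≤ n then σ k (x (k + 1)) (x k) else x k

/-- The full distortion `ψ`, applying `σ^{(k)}_{x_{k+1}}` to every coordinate. -/
def psiInf (q : ℕ → ℕ) (σ : ∀ n, Fin (q (n + 1)) → Equiv.Perm (Fin (q n)))
    (x : ∀ k, Fin (q k)) : ∀ k, Fin (q k) :=
  fun k => σ k (x (k + 1)) (x k)

/-- The maximal point `x⁺ = (q_0−1, q_1−1, …)`. -/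
def xMax (q : ℕ → ℕ) (hq : ∀ n, 2 ≤ q n) : ∀ n, Fin (q n) :=
  fun n => ⟨q n - 1, by have := hq n; omega⟩

/-- The minimal point `x⁻ = (0, 0, …)`. -/
def xMin (q : ℕ → ℕ) (hq : ∀ n, 2 ≤ q n) : ∀ n, Fin (q n) :=
  fun n => ⟨0, by have := hq n; omega⟩

attribute [local instance] Classical.propDecidable

namespace Stmt16Aux
def fsucc {n : ℕ} (a : Fin n) : Fin n := ⟨(a.val + 1) % n, Nat.mod_lt _ a.pos⟩
def fpred {n : ℕ} (a : Fin n) : Fin n := ⟨(a.val + (n - 1)) % n, Nat.mod_lt _ a.pos⟩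
lemma fsucc_val {n : ℕ} (a : Fin n) (h : (a : ℕ) ≠ n - 1) : (fsucc a : ℕ) = a + 1 := by
  have := a.isLt; simp only [fsucc]; exact Nat.mod_eq_of_lt (by omega)
lemma fpred_val {n : ℕ} (a : Fin n) (h : (a : ℕ) ≠ 0) : (fpred a : ℕ) = a - 1 := by
  have := a.isLt
  simp only [fpred]
  have h2 : (a : ℕ) + (n - 1) = (a - 1) + n := by omega
  rw [h2, Nat.add_mod_right]
  exact Nat.mod_eq_of_lt (by omega)
lemma fpred_fsucc {n : ℕ} (a : Fin n) (h : (a : ℕ) ≠ n - 1) : fpred (fsucc a) = a := by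
  have h1 := fsucc_val a h
  have h2 : ((fsucc a : Fin n) : ℕ) ≠ 0 := by omega
  apply Fin.ext
  rw [fpred_val _ h2, h1]
  omega
lemma fsucc_fpred {n : ℕ} (a : Fin n) (h : (a : ℕ) ≠ 0) : fsucc (fpred a) = a := by
  have := a.isLt
  have h1 := fpred_val a h
  have h2 : ((fpred a : Fin n) : ℕ) ≠ n - 1 := by omega
  apply Fin.ext
  rw [fsucc_val _ h2, h1]
  omega

section Main

variable (q : ℕ → ℕ) (hq : ∀ n, 2 ≤ q n)
    (σ : ∀ n, Fin (q (n + 1)) → Equiv.Perm (Fin (q n)))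
    (hσ0 : ∀ n (i : Fin (q (n + 1))) (a : Fin (q n)), (a : ℕ) = 0 → (σ n i a : ℕ) = 0)
    (hσmax : ∀ n (i : Fin (q (n + 1))) (a : Fin (q n)),
      (a : ℕ) = q n - 1 → (σ n i a : ℕ) = q n - 1)

def Tf (x : ∀ k, Fin (q k)) : ∀ k, Fin (q k) := fun k =>
  if ∀ j, j < k → x j = xMax q hq j then
    (if x k = xMax q hq k then xMin q hq k
     else (σ k (x (k + 1))).symm (fsucc (σ k (x (k + 1)) (x k))))
  else x k

def Tg (y : ∀ k, Fin (q k)) : ∀ k, Fin (q k) := fun k =>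
  if ∀ j, j < k → y j = xMin q hq j then
    (if y k = xMin q hq k then xMax q hq k
     else (σ k (y (k + 1))).symm (fpred (σ k (y (k + 1)) (y k))))
  else y k

variable {q}

lemma val_max_iff {n : ℕ} {a : Fin (q n)} : a = xMax q hq n ↔ (a : ℕ) = q n - 1 := by
  constructor
  · rintro rfl; rfl
  · intro h; exact Fin.ext h

lemma val_min_iff {n : ℕ} {a : Fin (q n)} : a = xMin q hq n ↔ (a : ℕ) = 0 := by
  constructor
  · rintro rfl; rfl
  · intro h; exact Fin.ext h

include hσmax in
lemma sigma_max_iff {n : ℕ} (i : Fin (q (n + 1))) (a : Fin (q n)) :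
    σ n i a = xMax q hq n ↔ a = xMax q hq n := by
  constructor
  · intro h
    have h2 : σ n i (xMax q hq n) = xMax q hq n :=
      (val_max_iff hq).mpr (hσmax n i _ rfl)
    exact (σ n i).injective (h.trans h2.symm)
  · intro h; exact (val_max_iff hq).mpr (hσmax n i a ((val_max_iff hq).mp h))

include hσ0 in
lemma sigma_min_iff {n : ℕ} (i : Fin (q (n + 1))) (a : Fin (q n)) :
    σ n i a = xMin q hq n ↔ a = xMin q hq n := by
  constructor
  · intro h
    have h2 : σ n i (xMin q hq n) = xMin q hq n :=
      (val_min_iff hq).mpr (hσ0 n i _ rfl)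
    exact (σ n i).injective (h.trans h2.symm)
  · intro h; exact (val_min_iff hq).mpr (hσ0 n i a ((val_min_iff hq).mp h))

include hσmax in
lemma sigma_symm_max_iff {n : ℕ} (i : Fin (q (n + 1))) (a : Fin (q n)) :
    (σ n i).symm a = xMax q hq n ↔ a = xMax q hq n := by
  have h2 : σ n i (xMax q hq n) = xMax q hq n := (val_max_iff hq).mpr (hσmax n i _ rfl)
  rw [Equiv.symm_apply_eq, h2]

include hσ0 in
lemma sigma_symm_min_iff {n : ℕ} (i : Fin (q (n + 1))) (a : Fin (q n)) :
    (σ n i).symm a = xMin q hq n ↔ a = xMin q hq n := by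
  have h2 : σ n i (xMin q hq n) = xMin q hq n := (val_min_iff hq).mpr (hσ0 n i _ rfl)
  rw [Equiv.symm_apply_eq, h2]

-- coordinate descriptions of Tf
lemma Tf_lt {x : ∀ k, Fin (q k)} {k : ℕ} (h : ∀ j, j < k → x j = xMax q hq j)
    (hk : x k = xMax q hq k) : Tf q hq σ x k = xMin q hq k := by
  unfold Tf; rw [if_pos h, if_pos hk]

lemma Tf_at {x : ∀ k, Fin (q k)} {k : ℕ} (h : ∀ j, j < k → x j = xMax q hq j)
    (hk : x k ≠ xMax q hq k) :
    Tf q hq σ x k = (σ k (x (k + 1))).symm (fsucc (σ k (x (k + 1)) (x k))) := by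
  unfold Tf; rw [if_pos h, if_neg hk]

lemma Tf_gt {x : ∀ k, Fin (q k)} {k : ℕ} (h : ¬ ∀ j, j < k → x j = xMax q hq j) :
    Tf q hq σ x k = x k := by
  unfold Tf; rw [if_neg h]

lemma Tg_lt {y : ∀ k, Fin (q k)} {k : ℕ} (h : ∀ j, j < k → y j = xMin q hq j)
    (hk : y k = xMin q hq k) : Tg q hq σ y k = xMax q hq k := by
  unfold Tg; rw [if_pos h, if_pos hk]

lemma Tg_at {y : ∀ k, Fin (q k)} {k : ℕ} (h : ∀ j, j < k → y j = xMin q hq j)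
    (hk : y k ≠ xMin q hq k) :
    Tg q hq σ y k = (σ k (y (k + 1))).symm (fpred (σ k (y (k + 1)) (y k))) := by
  unfold Tg; rw [if_pos h, if_neg hk]

lemma Tg_gt {y : ∀ k, Fin (q k)} {k : ℕ} (h : ¬ ∀ j, j < k → y j = xMin q hq j) :
    Tg q hq σ y k = y k := by
  unfold Tg; rw [if_neg h]

include hσ0 hσmax in
lemma Tf_at_ne_min {x : ∀ k, Fin (q k)} {k : ℕ} (hk : x k ≠ xMax q hq k) :
    (σ k (x (k + 1))).symm (fsucc (σ k (x (k + 1)) (x k))) ≠ xMin q hq k := by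
  rw [Ne, sigma_symm_min_iff hq σ hσ0, val_min_iff hq]
  have hb : (σ k (x (k + 1)) (x k) : ℕ) ≠ q k - 1 := by
    intro h
    exact hk ((sigma_max_iff hq σ hσmax _ _).mp ((val_max_iff hq).mpr h))
  rw [fsucc_val _ hb]
  omega

include hσ0 hσmax in
lemma Tg_at_ne_max {y : ∀ k, Fin (q k)} {k : ℕ} (hk : y k ≠ xMin q hq k) :
    (σ k (y (k + 1))).symm (fpred (σ k (y (k + 1)) (y k))) ≠ xMax q hq k := by
  rw [Ne, sigma_symm_max_iff hq σ hσmax, val_max_iff hq]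
  have hb : (σ k (y (k + 1)) (y k) : ℕ) ≠ 0 := by
    intro h
    exact hk ((sigma_min_iff hq σ hσ0 _ _).mp ((val_min_iff hq).mpr h))
  have := (σ k (y (k + 1)) (y k)).isLt
  have h2 := hq k
  rw [fpred_val _ hb]
  omega

-- prefix correspondence
include hσ0 hσmax in
lemma Tf_prefix_iff {x : ∀ k, Fin (q k)} {k : ℕ} :
    (∀ j, j < k → Tf q hq σ x j = xMin q hq j) ↔ (∀ j, j < k → x j = xMax q hq j) := by
  constructor
  · intro h
    by_contra hc
    push_neg at hc
    obtain ⟨j0, hj0lt, hj0⟩ := hc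
    -- take the least such j
    have hne : {j | x j ≠ xMax q hq j}.Nonempty := ⟨j0, hj0⟩
    set i := sInf {j | x j ≠ xMax q hq j} with hi
    have hmem : x i ≠ xMax q hq i := Nat.sInf_mem hne
    have hilt : i < k := lt_of_le_of_lt (Nat.sInf_le hj0) hj0lt
    have hpre : ∀ j, j < i → x j = xMax q hq j := by
      intro j hj
      by_contra hcc
      have : j ∈ {j | x j ≠ xMax q hq j} := hcc
      have := Nat.sInf_le this
      omega
    have := h i hilt
    rw [Tf_at hq σ hpre hmem] at this
    exact Tf_at_ne_min hq σ hσ0 hσmax hmem this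
  · intro h j hj
    exact Tf_lt hq σ (fun j' hj' => h j' (hj'.trans hj)) (h j hj)

include hσ0 hσmax in
lemma Tg_prefix_iff {y : ∀ k, Fin (q k)} {k : ℕ} :
    (∀ j, j < k → Tg q hq σ y j = xMax q hq j) ↔ (∀ j, j < k → y j = xMin q hq j) := by
  constructor
  · intro h
    by_contra hc
    push_neg at hc
    obtain ⟨j0, hj0lt, hj0⟩ := hc
    have hne : {j | y j ≠ xMin q hq j}.Nonempty := ⟨j0, hj0⟩
    set i := sInf {j | y j ≠ xMin q hq j} with hi
    have hmem : y i ≠ xMin q hq i := Nat.sInf_mem hne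
    have hilt : i < k := lt_of_le_of_lt (Nat.sInf_le hj0) hj0lt
    have hpre : ∀ j, j < i → y j = xMin q hq j := by
      intro j hj
      by_contra hcc
      have : j ∈ {j | y j ≠ xMin q hq j} := hcc
      have := Nat.sInf_le this
      omega
    have := h i hilt
    rw [Tg_at hq σ hpre hmem] at this
    exact Tg_at_ne_max hq σ hσ0 hσmax hmem this
  · intro h j hj
    exact Tg_lt hq σ (fun j' hj' => h j' (hj'.trans hj)) (h j hj)

include hσ0 hσmax in
lemma Tg_Tf (x : ∀ k, Fin (q k)) : Tg q hq σ (Tf q hq σ x) = x := by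
  funext k
  by_cases hc : ∀ j, j < k → x j = xMax q hq j
  · have hpre : ∀ j, j < k → Tf q hq σ x j = xMin q hq j :=
      (Tf_prefix_iff hq σ hσ0 hσmax).mpr hc
    by_cases hk : x k = xMax q hq k
    · have h1 : Tf q hq σ x k = xMin q hq k := Tf_lt hq σ hc hk
      rw [Tg_lt hq σ hpre h1, hk]
    · have h1 : Tf q hq σ x k = (σ k (x (k + 1))).symm (fsucc (σ k (x (k + 1)) (x k))) :=
        Tf_at hq σ hc hk
      have h2 : Tf q hq σ x (k + 1) = x (k + 1) := by
        apply Tf_gt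
        push_neg
        exact ⟨k, by omega, hk⟩
      have hne : Tf q hq σ x k ≠ xMin q hq k := by
        rw [h1]; exact Tf_at_ne_min hq σ hσ0 hσmax hk
      rw [Tg_at hq σ hpre hne, h2, h1, Equiv.apply_symm_apply]
      have hb : (σ k (x (k + 1)) (x k) : ℕ) ≠ q k - 1 := by
        intro h
        exact hk ((sigma_max_iff hq σ hσmax _ _).mp ((val_max_iff hq).mpr h))
      rw [fpred_fsucc _ hb, Equiv.symm_apply_apply]
  · have hne : ¬ ∀ j, j < k → Tf q hq σ x j = xMin q hq j := by
      intro h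
      exact hc ((Tf_prefix_iff hq σ hσ0 hσmax).mp h)
    rw [Tg_gt hq σ hne, Tf_gt hq σ hc]

include hσ0 hσmax in
lemma Tf_Tg (y : ∀ k, Fin (q k)) : Tf q hq σ (Tg q hq σ y) = y := by
  funext k
  by_cases hc : ∀ j, j < k → y j = xMin q hq j
  · have hpre : ∀ j, j < k → Tg q hq σ y j = xMax q hq j :=
      (Tg_prefix_iff hq σ hσ0 hσmax).mpr hc
    by_cases hk : y k = xMin q hq k
    · have h1 : Tg q hq σ y k = xMax q hq k := Tg_lt hq σ hc hk
      rw [Tf_lt hq σ hpre h1, hk]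
    · have h1 : Tg q hq σ y k = (σ k (y (k + 1))).symm (fpred (σ k (y (k + 1)) (y k))) :=
        Tg_at hq σ hc hk
      have h2 : Tg q hq σ y (k + 1) = y (k + 1) := by
        apply Tg_gt
        push_neg
        exact ⟨k, by omega, hk⟩
      have hne : Tg q hq σ y k ≠ xMax q hq k := by
        rw [h1]; exact Tg_at_ne_max hq σ hσ0 hσmax hk
      rw [Tf_at hq σ hpre hne, h2, h1, Equiv.apply_symm_apply]
      have hb : (σ k (y (k + 1)) (y k) : ℕ) ≠ 0 := by
        intro h
        exact hk ((sigma_min_iff hq σ hσ0 _ _).mp ((val_min_iff hq).mpr h))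
      rw [fsucc_fpred _ hb, Equiv.symm_apply_apply]
  · have hne : ¬ ∀ j, j < k → Tg q hq σ y j = xMax q hq j := by
      intro h
      exact hc ((Tg_prefix_iff hq σ hσ0 hσmax).mp h)
    rw [Tf_gt hq σ hne, Tg_gt hq σ hc]

/-- The odomutant as a permutation. -/
def TT : Equiv.Perm (∀ k, Fin (q k)) :=
  ⟨Tf q hq σ, Tg q hq σ, Tg_Tf hq σ hσ0 hσmax, Tf_Tg hq σ hσ0 hσmax⟩

-- ## Abstract lemmas

lemma cocycle_abstract {X : Type*} (R : Equiv.Perm X) (P : X → Prop) (h : X → ℕ) (N : ℕ)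
    (step : ∀ y, P y → h y < N → P (R y) ∧ h (R y) = h y + 1)
    (bnd : ∀ y, P y → h y ≤ N)
    (inj : ∀ y z, P y → P z → h y = h z → y = z)
    {y z : X} (hy : P y) (hz : P z) :
    (R ^ ((h z : ℤ) - (h y : ℤ))) y = z := by
  have main : ∀ j : ℕ, ∀ w, P w → h w + j ≤ N → P ((R ^ j) w) ∧ h ((R ^ j) w) = h w + j := by
    intro j
    induction j with
    | zero => intro w hw _; simpa using hw
    | succ n ih =>
      intro w hw hb
      obtain ⟨h1, h2⟩ := ih w hw (by omega)
      obtain ⟨h3, h4⟩ := step _ h1 (by omega)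
      have hpow : (R ^ (n + 1)) w = R ((R ^ n) w) := by
        rw [pow_succ', Equiv.Perm.mul_apply]
      rw [hpow]
      exact ⟨h3, by omega⟩
  rcases le_total (h y) (h z) with hle | hle
  · obtain ⟨hj1, hj2⟩ := main (h z - h y) y hy (by have := bnd z hz; omega)
    have heq : (R ^ (h z - h y)) y = z := inj _ _ hj1 hz (by omega)
    have hcast : (h z : ℤ) - (h y : ℤ) = ((h z - h y : ℕ) : ℤ) := by omega
    rw [hcast, zpow_natCast, heq]
  · obtain ⟨hj1, hj2⟩ := main (h y - h z) z hz (by have := bnd y hy; omega)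
    have heq : (R ^ (h y - h z)) z = y := inj _ _ hj1 hy (by omega)
    have hcast : (h z : ℤ) - (h y : ℤ) = -((h y - h z : ℕ) : ℤ) := by omega
    have hzz0 := congrArg ((R ^ (h y - h z))⁻¹ : Equiv.Perm X) heq
    have hzz : z = ((R ^ (h y - h z))⁻¹ : Equiv.Perm X) y := by
      rw [← hzz0]
      exact (Equiv.symm_apply_apply _ _).symm
    rw [hcast, zpow_neg, zpow_natCast]
    exact hzz.symm

lemma orbit_aux {X : Type*} (S T : Equiv.Perm X) (h1 : ∀ x, ∃ c : ℤ, S x = (T ^ c) x) :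
    ∀ (m : ℤ) (x : X), ∃ c : ℤ, (S ^ m) x = (T ^ c) x := by
  have hinv : ∀ x, ∃ c : ℤ, S⁻¹ x = (T ^ c) x := by
    intro x
    obtain ⟨c, hc⟩ := h1 (S⁻¹ x)
    refine ⟨-c, ?_⟩
    have h2 : x = (T ^ c) (S⁻¹ x) := by
      conv_lhs => rw [← (show S (S⁻¹ x) = x from Equiv.apply_symm_apply S x)]
      rw [hc]
    have h3 : ((T ^ c)⁻¹ : Equiv.Perm X) x = S⁻¹ x := by
      rw [Equiv.Perm.inv_def, Equiv.symm_apply_eq]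
      exact h2
    rw [zpow_neg]
    exact h3.symm
  intro m
  induction m using Int.induction_on with
  | zero => intro x; exact ⟨0, by simp⟩
  | succ n ih =>
    intro x
    obtain ⟨c1, hc1⟩ := h1 x
    obtain ⟨c2, hc2⟩ := ih ((T ^ c1) x)
    refine ⟨c2 + c1, ?_⟩
    have hsplit : (S ^ ((n : ℤ) + 1)) x = (S ^ (n : ℤ)) (S x) := by
      rw [zpow_add, zpow_one, Equiv.Perm.mul_apply]
    rw [hsplit, hc1, hc2, ← Equiv.Perm.mul_apply, ← zpow_add]
  | pred n ih =>
    intro x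
    obtain ⟨c1, hc1⟩ := hinv x
    obtain ⟨c2, hc2⟩ := ih ((T ^ c1) x)
    refine ⟨c2 + c1, ?_⟩
    have hsplit : (S ^ (-(n : ℤ) - 1)) x = (S ^ (-(n : ℤ))) (S⁻¹ x) := by
      rw [sub_eq_add_neg, zpow_add, Equiv.Perm.mul_apply, zpow_neg_one]
    rw [hsplit, hc1, hc2, ← Equiv.Perm.mul_apply, ← zpow_add]

-- ## Continuity helpers

lemma cylinder_isOpen (q : ℕ → ℕ) (x : ∀ n, Fin (q n)) (M : ℕ) :
    IsOpen {y : ∀ n, Fin (q n) | ∀ j, j ≤ M → y j = x j} := by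
  have hset : {y : ∀ n, Fin (q n) | ∀ j, j ≤ M → y j = x j}
      = ⋂ j : Fin (M + 1), {y : ∀ n, Fin (q n) | y (j : ℕ) = x (j : ℕ)} := by
    ext y
    simp only [Set.mem_setOf_eq, Set.mem_iInter]
    constructor
    · intro h j; exact h (j : ℕ) (by omega)
    · intro h j hj; exact h ⟨j, by omega⟩
  rw [hset]
  refine isOpen_iInter_of_finite fun j => ?_
  show IsOpen ((fun y : ∀ n, Fin (q n) => y (j : ℕ)) ⁻¹' {x (j : ℕ)})
  exact (continuous_apply (j : ℕ)).isOpen_preimage _ (isOpen_discrete _)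

lemma continuous_of_local (q : ℕ → ℕ) (f : (∀ n, Fin (q n)) → (∀ n, Fin (q n)))
    (h : ∀ x y : ∀ n, Fin (q n), ∀ k, (∀ j, j ≤ k + 1 → y j = x j) → f y k = f x k) :
    Continuous f := by
  refine continuous_pi fun k => continuous_iff_continuousAt.mpr fun x => ?_
  have hopen := cylinder_isOpen q x (k + 1)
  have hmem : {y : ∀ n, Fin (q n) | f y k = f x k} ∈ nhds x :=
    Filter.mem_of_superset (hopen.mem_nhds (fun j hj => rfl)) (fun y hy => h x y k hy)
  exact Filter.Tendsto.congr' (by filter_upwards [hmem] with y hy using hy.symm)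
    tendsto_const_nhds

lemma continuousOn_of_local (q : ℕ → ℕ) (c : (∀ n, Fin (q n)) → ℤ) (s : Set (∀ n, Fin (q n)))
    (h : ∀ x ∈ s, ∃ M, ∀ y ∈ s, (∀ j, j ≤ M → y j = x j) → c y = c x) :
    ContinuousOn c s := by
  intro x hx
  obtain ⟨M, hM⟩ := h x hx
  have hopen := cylinder_isOpen q x M
  have hmem : {y : ∀ n, Fin (q n) | c y = c x} ∈ nhdsWithin x s := by
    have hcyl : {y : ∀ n, Fin (q n) | ∀ j, j ≤ M → y j = x j} ∈ nhdsWithin x s :=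
      nhdsWithin_le_nhds (hopen.mem_nhds (fun j hj => rfl))
    filter_upwards [hcyl, self_mem_nhdsWithin] with y hy1 hy2
    exact hM y hy2 hy1
  exact Filter.Tendsto.congr' (by filter_upwards [hmem] with y hy using hy.symm)
    tendsto_const_nhds

-- ## Mixed-radix arithmetic

def Qp (q : ℕ → ℕ) (k : ℕ) : ℕ := ∏ j ∈ Finset.range k, q j

lemma Qp_pos (q : ℕ → ℕ) (hq : ∀ n, 2 ≤ q n) (k : ℕ) : 0 < Qp q k :=
  Finset.prod_pos fun j _ => by have := hq j; omega

lemma Qp_succ (q : ℕ → ℕ) (k : ℕ) : Qp q (k + 1) = Qp q k * q k :=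
  Finset.prod_range_succ _ _

lemma telescope (q : ℕ → ℕ) (hq : ∀ n, 2 ≤ q n) (j : ℕ) :
    (∑ k ∈ Finset.range j, (q k - 1) * Qp q k) = Qp q j - 1 := by
  induction j with
  | zero => simp [Qp]
  | succ n ih =>
    rw [Finset.sum_range_succ, ih, Qp_succ]
    have h1 := Qp_pos q hq n
    have h2 := hq n
    obtain ⟨m, hm⟩ : ∃ m, q n = m + 2 := ⟨q n - 2, by omega⟩
    obtain ⟨P, hP⟩ : ∃ P, Qp q n = P + 1 := ⟨Qp q n - 1, by omega⟩
    rw [hm, hP]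
    have h3 : m + 2 - 1 = m + 1 := rfl
    rw [h3]
    have hx : (P + 1) * (m + 2) = (P + (m + 1) * (P + 1)) + 1 := by ring
    omega

lemma sum_bound (q : ℕ → ℕ) (hq : ∀ n, 2 ≤ q n) (a : ℕ → ℕ) (j : ℕ)
    (ha : ∀ k, k < j → a k < q k) :
    (∑ k ∈ Finset.range j, a k * Qp q k) ≤ Qp q j - 1 := by
  rw [← telescope q hq j]
  refine Finset.sum_le_sum fun k hk => ?_
  exact Nat.mul_le_mul_right _ (by have := ha k (Finset.mem_range.mp hk); omega)

lemma digits_inj (q : ℕ → ℕ) (hq : ∀ n, 2 ≤ q n) (j : ℕ) (a b : ℕ → ℕ)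
    (ha : ∀ k, k < j → a k < q k) (hb : ∀ k, k < j → b k < q k)
    (h : (∑ k ∈ Finset.range j, a k * Qp q k) = ∑ k ∈ Finset.range j, b k * Qp q k) :
    ∀ k, k < j → a k = b k := by
  induction j with
  | zero => intro k hk; omega
  | succ n ih =>
    rw [Finset.sum_range_succ, Finset.sum_range_succ] at h
    have hA := sum_bound q hq a n (fun k hk => ha k (by omega))
    have hB := sum_bound q hq b n (fun k hk => hb k (by omega))
    have hQ := Qp_pos q hq n
    have htop : a n = b n := by
      by_contra hne
      rcases Nat.lt_or_ge (a n) (b n) with hlt | hge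
      · have hmul : (a n + 1) * Qp q n ≤ b n * Qp q n := Nat.mul_le_mul_right _ (by omega)
        have hexp : (a n + 1) * Qp q n = a n * Qp q n + Qp q n := by ring
        omega
      · have hlt2 : b n < a n := by omega
        have hmul : (b n + 1) * Qp q n ≤ a n * Qp q n := Nat.mul_le_mul_right _ (by omega)
        have hexp : (b n + 1) * Qp q n = b n * Qp q n + Qp q n := by ring
        omega
    have hrest : (∑ k ∈ Finset.range n, a k * Qp q k) = ∑ k ∈ Finset.range n, b k * Qp q k := by
      rw [htop] at h; omega
    intro k hk
    rcases Nat.lt_or_ge k n with hkn | hkn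
    · exact ih (fun k hk => ha k (by omega)) (fun k hk => hb k (by omega)) hrest k hkn
    · have : k = n := by omega
      rw [this]; exact htop

lemma msum_step (q : ℕ → ℕ) (hq : ∀ n, 2 ≤ q n) (i i' : ℕ) (hle : i' ≤ i) (u v : ℕ → ℕ)
    (hlt : ∀ k, k < i' → u k = q k - 1) (hlt' : ∀ k, k < i' → v k = 0)
    (heq : v i' = u i' + 1)
    (hgt : ∀ k, i' < k → k ≤ i → v k = u k) :
    (∑ k ∈ Finset.range (i + 1), v k * Qp q k)
      = (∑ k ∈ Finset.range (i + 1), u k * Qp q k) + 1 := by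
  revert hgt
  induction i, hle using Nat.le_induction with
  | base =>
    intro hgt
    rw [Finset.sum_range_succ, Finset.sum_range_succ, heq]
    have hzero : (∑ k ∈ Finset.range i', v k * Qp q k) = 0 :=
      Finset.sum_eq_zero fun k hk => by rw [hlt' k (Finset.mem_range.mp hk), zero_mul]
    have hmax : (∑ k ∈ Finset.range i', u k * Qp q k) = Qp q i' - 1 := by
      rw [← telescope q hq i']
      exact Finset.sum_congr rfl fun k hk => by rw [hlt k (Finset.mem_range.mp hk)]
    rw [hzero, hmax]
    have hQ := Qp_pos q hq i'
    have hexp : (u i' + 1) * Qp q i' = u i' * Qp q i' + Qp q i' := by ring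
    omega
  | succ n hn ih =>
    intro hgt
    rw [Finset.sum_range_succ (n := n + 1), Finset.sum_range_succ (n := n + 1)]
    rw [ih (fun k hk1 hk2 => hgt k hk1 (by omega)), hgt (n + 1) (by omega) le_rfl]
    omega


-- ## index of first non-maximal coordinate

def idxm (q : ℕ → ℕ) (hq : ∀ n, 2 ≤ q n) (x : ∀ k, Fin (q k)) : ℕ :=
  sInf {k | x k ≠ xMax q hq k}

lemma idx_lt {x : ∀ k, Fin (q k)} {j : ℕ} (hj : j < idxm q hq x) : x j = xMax q hq j := by
  by_contra h
  have hmem : j ∈ {k | x k ≠ xMax q hq k} := h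
  have h2 : idxm q hq x ≤ j := Nat.sInf_le hmem
  omega

lemma idx_mem {x : ∀ k, Fin (q k)} (hx : x ≠ xMax q hq) :
    x (idxm q hq x) ≠ xMax q hq (idxm q hq x) :=
  Nat.sInf_mem (Function.ne_iff.mp hx)

lemma not_prefix {x : ∀ k, Fin (q k)} {i k : ℕ} (hi : x i ≠ xMax q hq i) (hik : i < k) :
    ¬ ∀ j, j < k → x j = xMax q hq j :=
  fun h => hi (h i hik)

lemma idx_le {x : ∀ k, Fin (q k)} {k : ℕ} (hk : x k ≠ xMax q hq k) : idxm q hq x ≤ k :=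
  Nat.sInf_le hk

lemma idx_congr {x y : ∀ k, Fin (q k)} (hx : x ≠ xMax q hq)
    (h : ∀ j, j ≤ idxm q hq x → y j = x j) : idxm q hq y = idxm q hq x := by
  have h1 : y (idxm q hq x) ≠ xMax q hq (idxm q hq x) := by
    rw [h _ le_rfl]; exact idx_mem hq hx
  have h2 : idxm q hq y ≤ idxm q hq x := idx_le hq h1
  have hyne : y ≠ xMax q hq := fun hc => h1 (by rw [hc])
  rcases Nat.lt_or_ge (idxm q hq y) (idxm q hq x) with hlt | hge
  · exfalso
    have h4 := idx_mem hq hyne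
    have h5 : y (idxm q hq y) = x (idxm q hq y) := h (idxm q hq y) (by omega)
    exact h4 (h5.trans (idx_lt hq hlt))
  · omega

-- ## locality of Tf and Tg

lemma Tf_local (x y : ∀ k, Fin (q k)) (k : ℕ) (h : ∀ j, j ≤ k + 1 → y j = x j) :
    Tf q hq σ y k = Tf q hq σ x k := by
  have h1 : y k = x k := h k (by omega)
  have h2 : y (k + 1) = x (k + 1) := h (k + 1) le_rfl
  by_cases hc : ∀ j, j < k → x j = xMax q hq j
  · have hc' : ∀ j, j < k → y j = xMax q hq j := fun j hj => (h j (by omega)).trans (hc j hj)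
    by_cases hk : x k = xMax q hq k
    · rw [Tf_lt hq σ hc' (h1.trans hk), Tf_lt hq σ hc hk]
    · rw [Tf_at hq σ hc' (by rw [h1]; exact hk), Tf_at hq σ hc hk, h1, h2]
  · have hc' : ¬ ∀ j, j < k → y j = xMax q hq j :=
      fun hy => hc (fun j hj => ((h j (by omega)).symm.trans (hy j hj)))
    rw [Tf_gt hq σ hc', Tf_gt hq σ hc, h1]

lemma Tg_local (x y : ∀ k, Fin (q k)) (k : ℕ) (h : ∀ j, j ≤ k + 1 → y j = x j) :
    Tg q hq σ y k = Tg q hq σ x k := by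
  have h1 : y k = x k := h k (by omega)
  have h2 : y (k + 1) = x (k + 1) := h (k + 1) le_rfl
  by_cases hc : ∀ j, j < k → x j = xMin q hq j
  · have hc' : ∀ j, j < k → y j = xMin q hq j := fun j hj => (h j (by omega)).trans (hc j hj)
    by_cases hk : x k = xMin q hq k
    · rw [Tg_lt hq σ hc' (h1.trans hk), Tg_lt hq σ hc hk]
    · rw [Tg_at hq σ hc' (by rw [h1]; exact hk), Tg_at hq σ hc hk, h1, h2]
  · have hc' : ¬ ∀ j, j < k → y j = xMin q hq j :=
      fun hy => hc (fun j hj => ((h j (by omega)).symm.trans (hy j hj)))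
    rw [Tg_gt hq σ hc', Tg_gt hq σ hc, h1]

-- ## description of the odometer S

variable (S : Equiv.Perm (∀ n, Fin (q n)))
  (hS : ∀ (x : ∀ n, Fin (q n)) (i : ℕ),
      (∀ j, j < i → (x j : ℕ) = q j - 1) → (x i : ℕ) ≠ q i - 1 →
        (∀ j, j < i → (S x j : ℕ) = 0) ∧ (S x i : ℕ) = (x i : ℕ) + 1 ∧
          ∀ j, i < j → S x j = x j)
  (hS' : ∀ (x : ∀ n, Fin (q n)), (∀ j, (x j : ℕ) = q j - 1) → ∀ j, (S x j : ℕ) = 0)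

include hS in
lemma S_desc {x : ∀ k, Fin (q k)} {i : ℕ} (hlt : ∀ j, j < i → x j = xMax q hq j)
    (hi : x i ≠ xMax q hq i) :
    (∀ j, j < i → S x j = xMin q hq j) ∧ ((S x i : ℕ) = (x i : ℕ) + 1) ∧
      (∀ j, i < j → S x j = x j) := by
  obtain ⟨h1, h2, h3⟩ := hS x i (fun j hj => by rw [hlt j hj]; rfl)
    (fun hc => hi ((val_max_iff hq).mpr hc))
  exact ⟨fun j hj => (val_min_iff hq).mpr (h1 j hj), h2, h3⟩

include hS' in
lemma S_max : S (xMax q hq) = xMin q hq :=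
  funext fun k => (val_min_iff hq).mpr (hS' _ (fun j => rfl) k)

lemma Tf_max : Tf q hq σ (xMax q hq) = xMin q hq :=
  funext fun k => Tf_lt hq σ (fun j _ => rfl) rfl

-- ## the odomutant identity

include hσ0 hσmax hS in
lemma odomutant_eq (x : ∀ k, Fin (q k)) (hx : x ≠ xMax q hq) (n : ℕ)
    (hn : ∃ k, k ≤ n ∧ psiInf q σ x k ≠ xMax q hq k) :
    psiN q σ n (Tf q hq σ x) = S (psiN q σ n x) := by
  set i := idxm q hq x with hidef
  have hlt : ∀ j, j < i → x j = xMax q hq j := fun j hj => idx_lt hq hj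
  have hi : x i ≠ xMax q hq i := idx_mem hq hx
  have hin : i ≤ n := by
    obtain ⟨k, hkn, hk⟩ := hn
    have hxk : x k ≠ xMax q hq k := by
      intro hc
      exact hk ((sigma_max_iff hq σ hσmax _ _).mpr hc)
    exact le_trans (idx_le hq hxk) hkn
  have hz_le : ∀ k, k ≤ n → psiN q σ n x k = σ k (x (k + 1)) (x k) := by
    intro k hk; simp only [psiN]; rw [if_pos hk]
  have hz_gt : ∀ k, n < k → psiN q σ n x k = x k := by
    intro k hk; simp only [psiN]; rw [if_neg (by omega)]
  have hzlt : ∀ j, j < i → psiN q σ n x j = xMax q hq j := by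
    intro j hj
    rw [hz_le j (by omega)]
    exact (sigma_max_iff hq σ hσmax _ _).mpr (hlt j hj)
  have hzi : psiN q σ n x i ≠ xMax q hq i := by
    rw [hz_le i hin]
    intro hc
    exact hi ((sigma_max_iff hq σ hσmax _ _).mp hc)
  obtain ⟨hd1, hd2, hd3⟩ := S_desc hq S hS hzlt hzi
  -- coordinates of Tf x
  have hT_lt : ∀ j, j < i → Tf q hq σ x j = xMin q hq j :=
    fun j hj => Tf_lt hq σ (fun j' hj' => hlt j' (by omega)) (hlt j hj)
  have hT_at : Tf q hq σ x i = (σ i (x (i + 1))).symm (fsucc (σ i (x (i + 1)) (x i))) :=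
    Tf_at hq σ hlt hi
  have hT_gt : ∀ k, i < k → Tf q hq σ x k = x k :=
    fun k hk => Tf_gt hq σ (not_prefix hq hi hk)
  funext k
  rcases Nat.lt_or_ge n k with hkgt | hkle
  · -- k > n ≥ i
    rw [hd3 k (by omega), hz_gt k hkgt]
    simp only [psiN]
    rw [if_neg (by omega)]
    exact hT_gt k (by omega)
  · -- k ≤ n
    have hL : psiN q σ n (Tf q hq σ x) k
        = σ k (Tf q hq σ x (k + 1)) (Tf q hq σ x k) := by
      simp only [psiN]; rw [if_pos hkle]
    rcases Nat.lt_trichotomy k i with hki | hki | hki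
    · rw [hL, hd1 k hki, hT_lt k hki]
      apply (sigma_min_iff hq σ hσ0 _ _).mpr
      rfl
    · subst hki
      rw [hL]
      have hTk1 : Tf q hq σ x (i + 1) = x (i + 1) := hT_gt (i + 1) (by omega)
      rw [hTk1, hT_at, Equiv.apply_symm_apply]
      apply Fin.ext
      have hbne : (σ i (x (i + 1)) (x i) : ℕ) ≠ q i - 1 := by
        intro hc
        exact hi ((sigma_max_iff hq σ hσmax _ _).mp ((val_max_iff hq).mpr hc))
      rw [fsucc_val _ hbne, hd2, hz_le i hkle]
    · rw [hL, hT_gt k hki, hT_gt (k + 1) (by omega), hd3 k hki, hz_le k hkle]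

-- ## cocycle machinery

def mS (q : ℕ → ℕ) (i : ℕ) (y : ∀ k, Fin (q k)) : ℕ :=
  ∑ k ∈ Finset.range (i + 1), (y k : ℕ) * Qp q k

def mT (q : ℕ → ℕ) (σ : ∀ n, Fin (q (n + 1)) → Equiv.Perm (Fin (q n))) (i : ℕ)
    (y : ∀ k, Fin (q k)) : ℕ :=
  ∑ k ∈ Finset.range (i + 1), ((σ k (y (k + 1))) (y k) : ℕ) * Qp q k

include hq in
lemma mS_all_max {i : ℕ} {y : ∀ k, Fin (q k)} (h : ∀ k, k ≤ i → y k = xMax q hq k) :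
    mS q i y = Qp q (i + 1) - 1 := by
  rw [← telescope q hq (i + 1)]
  refine Finset.sum_congr rfl fun k hk => ?_
  have hk' := Finset.mem_range.mp hk
  rw [h k (by omega)]
  rfl

include hσmax in
lemma mT_all_max {i : ℕ} {y : ∀ k, Fin (q k)} (h : ∀ k, k ≤ i → y k = xMax q hq k) :
    mT q σ i y = Qp q (i + 1) - 1 := by
  rw [← telescope q hq (i + 1)]
  refine Finset.sum_congr rfl fun k hk => ?_
  have hk' := Finset.mem_range.mp hk
  rw [hσmax k (y (k + 1)) (y k) ((val_max_iff hq).mp (h k (by omega)))]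

include hq hS in
lemma stepS (x : ∀ k, Fin (q k)) (i : ℕ) (y : ∀ k, Fin (q k))
    (hP : ∀ k, i < k → y k = x k) (hlt : mS q i y < Qp q (i + 1) - 1) :
    (∀ k, i < k → S y k = x k) ∧ mS q i (S y) = mS q i y + 1 := by
  have hnm : ∃ k, k ≤ i ∧ y k ≠ xMax q hq k := by
    by_contra hc
    push_neg at hc
    rw [mS_all_max hq (fun k hk => hc k hk)] at hlt
    omega
  obtain ⟨k0, hk0i, hk0⟩ := hnm
  have hyne : y ≠ xMax q hq := fun hc => hk0 (by rw [hc])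
  have hi' : y (idxm q hq y) ≠ xMax q hq (idxm q hq y) := idx_mem hq hyne
  have hle : idxm q hq y ≤ i := le_trans (idx_le hq hk0) hk0i
  have hprefix : ∀ j, j < idxm q hq y → y j = xMax q hq j := fun j hj => idx_lt hq hj
  obtain ⟨hd1, hd2, hd3⟩ := S_desc hq S hS hprefix hi'
  refine ⟨fun k hk => (hd3 k (by omega)).trans (hP k hk), ?_⟩
  refine msum_step q hq i (idxm q hq y) hle (fun k => (y k : ℕ)) (fun k => (S y k : ℕ))
    (fun k hk => ?_) (fun k hk => ?_) ?_ (fun k hk1 hk2 => ?_)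
  · show (y k : ℕ) = q k - 1
    rw [hprefix k hk]; rfl
  · show (S y k : ℕ) = 0
    rw [hd1 k hk]; rfl
  · exact hd2
  · show (S y k : ℕ) = (y k : ℕ)
    rw [hd3 k hk1]

include hq in
lemma bndS (i : ℕ) (y : ∀ k, Fin (q k)) : mS q i y ≤ Qp q (i + 1) - 1 :=
  sum_bound q hq _ _ (fun k _ => Fin.isLt _)

include hq in
lemma injS (x : ∀ k, Fin (q k)) (i : ℕ) (y z : ∀ k, Fin (q k))
    (hPy : ∀ k, i < k → y k = x k) (hPz : ∀ k, i < k → z k = x k)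
    (h : mS q i y = mS q i z) : y = z := by
  have hd := digits_inj q hq (i + 1) (fun k => (y k : ℕ)) (fun k => (z k : ℕ))
    (fun k _ => Fin.isLt _) (fun k _ => Fin.isLt _) h
  funext k
  rcases Nat.lt_or_ge k (i + 1) with hk | hk
  · exact Fin.ext (hd k hk)
  · rw [hPy k (by omega), hPz k (by omega)]

include hσ0 hσmax in
lemma stepT (x : ∀ k, Fin (q k)) (i : ℕ) (y : ∀ k, Fin (q k))
    (hP : ∀ k, i < k → y k = x k) (hlt : mT q σ i y < Qp q (i + 1) - 1) :
    (∀ k, i < k → Tf q hq σ y k = x k) ∧ mT q σ i (Tf q hq σ y) = mT q σ i y + 1 := by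
  have hnm : ∃ k, k ≤ i ∧ y k ≠ xMax q hq k := by
    by_contra hc
    push_neg at hc
    rw [mT_all_max hq σ hσmax (fun k hk => hc k hk)] at hlt
    omega
  obtain ⟨k0, hk0i, hk0⟩ := hnm
  have hyne : y ≠ xMax q hq := fun hc => hk0 (by rw [hc])
  have hi' : y (idxm q hq y) ≠ xMax q hq (idxm q hq y) := idx_mem hq hyne
  set i' := idxm q hq y with hi'def
  have hle : i' ≤ i := le_trans (idx_le hq hk0) hk0i
  have hprefix : ∀ j, j < i' → y j = xMax q hq j := fun j hj => idx_lt hq hj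
  have hT_lt : ∀ j, j < i' → Tf q hq σ y j = xMin q hq j :=
    fun j hj => Tf_lt hq σ (fun j' hj' => hprefix j' (by omega)) (hprefix j hj)
  have hT_at : Tf q hq σ y i' = (σ i' (y (i' + 1))).symm (fsucc (σ i' (y (i' + 1)) (y i'))) :=
    Tf_at hq σ hprefix hi'
  have hT_gt : ∀ k, i' < k → Tf q hq σ y k = y k :=
    fun k hk => Tf_gt hq σ (not_prefix hq hi' hk)
  refine ⟨fun k hk => (hT_gt k (by omega)).trans (hP k hk), ?_⟩
  refine msum_step q hq i i' hle (fun k => ((σ k (y (k + 1))) (y k) : ℕ))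
    (fun k => ((σ k (Tf q hq σ y (k + 1))) (Tf q hq σ y k) : ℕ))
    (fun k hk => ?_) (fun k hk => ?_) ?_ (fun k hk1 hk2 => ?_)
  · show ((σ k (y (k + 1))) (y k) : ℕ) = q k - 1
    exact hσmax k _ _ ((val_max_iff hq).mp (hprefix k hk))
  · show ((σ k (Tf q hq σ y (k + 1))) (Tf q hq σ y k) : ℕ) = 0
    rw [hT_lt k hk]
    exact hσ0 k _ _ rfl
  · show ((σ i' (Tf q hq σ y (i' + 1))) (Tf q hq σ y i') : ℕ)
        = ((σ i' (y (i' + 1))) (y i') : ℕ) + 1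
    rw [hT_gt (i' + 1) (by omega), hT_at, Equiv.apply_symm_apply]
    apply fsucc_val
    intro hc
    exact hi' ((sigma_max_iff hq σ hσmax _ _).mp ((val_max_iff hq).mpr hc))
  · show ((σ k (Tf q hq σ y (k + 1))) (Tf q hq σ y k) : ℕ) = ((σ k (y (k + 1))) (y k) : ℕ)
    rw [hT_gt k hk1, hT_gt (k + 1) (by omega)]

include hq in
lemma bndT (i : ℕ) (y : ∀ k, Fin (q k)) : mT q σ i y ≤ Qp q (i + 1) - 1 :=
  sum_bound q hq _ _ (fun k _ => Fin.isLt _)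

include hq in
lemma injT (x : ∀ k, Fin (q k)) (i : ℕ) (y z : ∀ k, Fin (q k))
    (hPy : ∀ k, i < k → y k = x k) (hPz : ∀ k, i < k → z k = x k)
    (h : mT q σ i y = mT q σ i z) : y = z := by
  have hd := digits_inj q hq (i + 1) (fun k => ((σ k (y (k + 1))) (y k) : ℕ))
    (fun k => ((σ k (z (k + 1))) (z k) : ℕ))
    (fun k _ => Fin.isLt _) (fun k _ => Fin.isLt _) h
  have down : ∀ d k, k + d = i + 1 → y k = z k := by
    intro d
    induction d with
    | zero => intro k hk; rw [hPy k (by omega), hPz k (by omega)]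
    | succ n ih =>
      intro k hk
      have h1 : y (k + 1) = z (k + 1) := ih (k + 1) (by omega)
      have h2 : ((σ k (y (k + 1))) (y k) : ℕ) = ((σ k (z (k + 1))) (z k) : ℕ) := hd k (by omega)
      have h3 : (σ k (z (k + 1))) (y k) = (σ k (z (k + 1))) (z k) := by
        apply Fin.ext
        rw [← h2, h1]
      exact (σ k (z (k + 1))).injective h3
  funext k
  rcases Nat.lt_or_ge k (i + 1) with hk | hk
  · exact down (i + 1 - k) k (by omega)
  · rw [hPy k (by omega), hPz k (by omega)]

include hσ0 hσmax hS in
lemma cocT (x : ∀ k, Fin (q k)) (hx : x ≠ xMax q hq) :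
    (S ^ ((mS q (idxm q hq x) (Tf q hq σ x) : ℤ) - (mS q (idxm q hq x) x : ℤ))) x
      = Tf q hq σ x := by
  set i := idxm q hq x with hidef
  refine cocycle_abstract S (fun y => ∀ k, i < k → y k = x k) (mS q i) (Qp q (i + 1) - 1)
    (fun y hy hlt => stepS hq S hS x i y hy hlt) (fun y _ => bndS hq i y)
    (fun y z hy hz hyz => injS hq x i y z hy hz hyz) (fun k _ => rfl) ?_
  exact fun k hk => Tf_gt hq σ (not_prefix hq (idx_mem hq hx) hk)

include hσ0 hσmax hS in
lemma cocS (x : ∀ k, Fin (q k)) (hx : x ≠ xMax q hq) :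
    (TT hq σ hσ0 hσmax ^ ((mT q σ (idxm q hq x) (S x) : ℤ) - (mT q σ (idxm q hq x) x : ℤ))) x
      = S x := by
  set i := idxm q hq x with hidef
  refine cocycle_abstract (TT hq σ hσ0 hσmax) (fun y => ∀ k, i < k → y k = x k)
    (mT q σ i) (Qp q (i + 1) - 1)
    (fun y hy hlt => stepT hq σ hσ0 hσmax x i y hy hlt) (fun y _ => bndT hq σ i y)
    (fun y z hy hz hyz => injT hq σ x i y z hy hz hyz) (fun k _ => rfl) ?_
  obtain ⟨hd1, hd2, hd3⟩ := S_desc hq S hS (fun j hj => idx_lt hq hj) (idx_mem hq hx)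
  exact fun k hk => hd3 k hk

include hS in
lemma S_local {x y : ∀ k, Fin (q k)} (hx : x ≠ xMax q hq)
    (h : ∀ j, j ≤ idxm q hq x + 1 → y j = x j) :
    ∀ k, k ≤ idxm q hq x + 1 → S y k = S x k := by
  set i := idxm q hq x with hidef
  have hlt : ∀ j, j < i → x j = xMax q hq j := fun j hj => idx_lt hq hj
  have hi : x i ≠ xMax q hq i := idx_mem hq hx
  have hlt' : ∀ j, j < i → y j = xMax q hq j := fun j hj => (h j (by omega)).trans (hlt j hj)
  have hi' : y i ≠ xMax q hq i := by rw [h i (by omega)]; exact hi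
  obtain ⟨ha1, ha2, ha3⟩ := S_desc hq S hS hlt' hi'
  obtain ⟨hb1, hb2, hb3⟩ := S_desc hq S hS hlt hi
  intro k hk
  rcases Nat.lt_trichotomy k i with hki | hki | hki
  · rw [ha1 k hki, hb1 k hki]
  · subst hki
    apply Fin.ext
    rw [ha2, hb2, h i (by omega)]
  · have hk1 : k = i + 1 := by omega
    subst hk1
    rw [ha3 _ (by omega), hb3 _ (by omega), h _ le_rfl]
end Main
end Stmt16Aux


/-- If all the permutations fix `0` and `q_n − 1`, the odomutant extends to a
homeomorphism of the Cantor set `X` having the same orbits as the odometer `S`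
at every point, with cocycles continuous off `x⁺`: `S` and `T` are strongly
orbit equivalent. -/
theorem stmt16 (q : ℕ → ℕ) (hq : ∀ n, 2 ≤ q n)
    (σ : ∀ n, Fin (q (n + 1)) → Equiv.Perm (Fin (q n)))
    (hσ0 : ∀ n (i : Fin (q (n + 1))) (a : Fin (q n)), (a : ℕ) = 0 → (σ n i a : ℕ) = 0)
    (hσmax : ∀ n (i : Fin (q (n + 1))) (a : Fin (q n)),
      (a : ℕ) = q n - 1 → (σ n i a : ℕ) = q n - 1)
    (S : Equiv.Perm (∀ n, Fin (q n)))
    (hS : ∀ (x : ∀ n, Fin (q n)) (i : ℕ),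
      (∀ j, j < i → (x j : ℕ) = q j - 1) → (x i : ℕ) ≠ q i - 1 →
        (∀ j, j < i → (S x j : ℕ) = 0) ∧ (S x i : ℕ) = (x i : ℕ) + 1 ∧
          ∀ j, i < j → S x j = x j)
    (hS' : ∀ (x : ∀ n, Fin (q n)), (∀ j, (x j : ℕ) = q j - 1) → ∀ j, (S x j : ℕ) = 0) :
    ∃ T : Equiv.Perm (∀ n, Fin (q n)),
      -- T is a homeomorphism of the Cantor set X
      Continuous (⇑T) ∧ Continuous (⇑T.symm) ∧
      -- T is the odomutant: ψ_n(Tx) = S(ψ_n x) for x ≠ x⁺ and n ≥ N⁺(ψ(x))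
      (∀ x, x ≠ xMax q hq →
        ∀ n, (∃ k ≤ n, psiInf q σ x k ≠ xMax q hq k) →
          psiN q σ n (T x) = S (psiN q σ n x)) ∧
      T (xMax q hq) = xMin q hq ∧
      -- T has the same orbits as S at every point of X
      (∀ x, (Set.range fun m : ℤ => (T ^ m) x) = Set.range fun m : ℤ => (S ^ m) x) ∧
      -- the cocycles exist everywhere and are continuous on X \ {x⁺}
      ∃ cS cT : (∀ n, Fin (q n)) → ℤ,
        (∀ x, S x = (T ^ cS x) x) ∧ (∀ x, T x = (S ^ cT x) x) ∧
        ContinuousOn cS {x | x ≠ xMax q hq} ∧ ContinuousOn cT {x | x ≠ xMax q hq} := by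
  classical
  refine ⟨Stmt16Aux.TT hq σ hσ0 hσmax, ?_, ?_, ?_, ?_, ?_, ?_⟩
  · exact Stmt16Aux.continuous_of_local q _ (fun x y k h => Stmt16Aux.Tf_local hq σ x y k h)
  · exact Stmt16Aux.continuous_of_local q _ (fun x y k h => Stmt16Aux.Tg_local hq σ x y k h)
  · exact fun x hx n hn => Stmt16Aux.odomutant_eq hq σ hσ0 hσmax S hS x hx n hn
  · exact Stmt16Aux.Tf_max hq σ
  · -- the orbits agree
    have hc1 : ∀ x, ∃ c : ℤ, S x = ((Stmt16Aux.TT hq σ hσ0 hσmax) ^ c) x := by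
      intro x
      by_cases hx : x = xMax q hq
      · refine ⟨1, ?_⟩
        rw [zpow_one, hx, Stmt16Aux.S_max hq S hS']
        exact (Stmt16Aux.Tf_max hq σ).symm
      · exact ⟨_, (Stmt16Aux.cocS hq σ hσ0 hσmax S hS x hx).symm⟩
    have hc2 : ∀ x, ∃ c : ℤ, (Stmt16Aux.TT hq σ hσ0 hσmax) x = (S ^ c) x := by
      intro x
      by_cases hx : x = xMax q hq
      · refine ⟨1, ?_⟩
        rw [zpow_one, hx, Stmt16Aux.S_max hq S hS']
        exact Stmt16Aux.Tf_max hq σ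
      · exact ⟨_, (Stmt16Aux.cocT hq σ hσ0 hσmax S hS x hx).symm⟩
    intro x
    ext y
    simp only [Set.mem_range]
    constructor
    · rintro ⟨m, rfl⟩
      obtain ⟨c, hc⟩ := Stmt16Aux.orbit_aux (Stmt16Aux.TT hq σ hσ0 hσmax) S hc2 m x
      exact ⟨c, hc.symm⟩
    · rintro ⟨m, rfl⟩
      obtain ⟨c, hc⟩ := Stmt16Aux.orbit_aux S (Stmt16Aux.TT hq σ hσ0 hσmax) hc1 m x
      exact ⟨c, hc.symm⟩
  · -- the cocycles
    refine ⟨fun x => if x = xMax q hq then 1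
        else (Stmt16Aux.mT q σ (Stmt16Aux.idxm q hq x) (S x) : ℤ)
          - (Stmt16Aux.mT q σ (Stmt16Aux.idxm q hq x) x : ℤ),
      fun x => if x = xMax q hq then 1
        else (Stmt16Aux.mS q (Stmt16Aux.idxm q hq x) (Stmt16Aux.Tf q hq σ x) : ℤ)
          - (Stmt16Aux.mS q (Stmt16Aux.idxm q hq x) x : ℤ), ?_, ?_, ?_, ?_⟩
    · intro x
      by_cases hx : x = xMax q hq
      · simp only [if_pos hx]
        rw [zpow_one, hx, Stmt16Aux.S_max hq S hS']
        exact (Stmt16Aux.Tf_max hq σ).symm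
      · simp only [if_neg hx]
        exact (Stmt16Aux.cocS hq σ hσ0 hσmax S hS x hx).symm
    · intro x
      by_cases hx : x = xMax q hq
      · simp only [if_pos hx]
        rw [zpow_one, hx, Stmt16Aux.S_max hq S hS']
        exact Stmt16Aux.Tf_max hq σ
      · simp only [if_neg hx]
        exact (Stmt16Aux.cocT hq σ hσ0 hσmax S hS x hx).symm
    · -- continuity of cS off x⁺
      apply Stmt16Aux.continuousOn_of_local q
      intro x hx
      have hxne : x ≠ xMax q hq := hx
      refine ⟨Stmt16Aux.idxm q hq x + 2, fun y hy hmatch => ?_⟩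
      have hyne : y ≠ xMax q hq := hy
      have hidx : Stmt16Aux.idxm q hq y = Stmt16Aux.idxm q hq x :=
        Stmt16Aux.idx_congr hq hxne (fun j hj => hmatch j (by omega))
      have hSl := Stmt16Aux.S_local hq S hS hxne (fun j hj => hmatch j (by omega))
      have hm1 : Stmt16Aux.mT q σ (Stmt16Aux.idxm q hq x) y
          = Stmt16Aux.mT q σ (Stmt16Aux.idxm q hq x) x :=
        Finset.sum_congr rfl fun k hk => by
          have hk' := Finset.mem_range.mp hk
          rw [hmatch k (by omega), hmatch (k + 1) (by omega)]
      have hm2 : Stmt16Aux.mT q σ (Stmt16Aux.idxm q hq x) (S y)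
          = Stmt16Aux.mT q σ (Stmt16Aux.idxm q hq x) (S x) :=
        Finset.sum_congr rfl fun k hk => by
          have hk' := Finset.mem_range.mp hk
          rw [hSl k (by omega), hSl (k + 1) (by omega)]
      simp only [if_neg hyne, if_neg hxne, hidx, hm1, hm2]
    · -- continuity of cT off x⁺
      apply Stmt16Aux.continuousOn_of_local q
      intro x hx
      have hxne : x ≠ xMax q hq := hx
      refine ⟨Stmt16Aux.idxm q hq x + 2, fun y hy hmatch => ?_⟩
      have hyne : y ≠ xMax q hq := hy
      have hidx : Stmt16Aux.idxm q hq y = Stmt16Aux.idxm q hq x :=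
        Stmt16Aux.idx_congr hq hxne (fun j hj => hmatch j (by omega))
      have hm1 : Stmt16Aux.mS q (Stmt16Aux.idxm q hq x) y
          = Stmt16Aux.mS q (Stmt16Aux.idxm q hq x) x :=
        Finset.sum_congr rfl fun k hk => by
          have hk' := Finset.mem_range.mp hk
          rw [hmatch k (by omega)]
      have hm2 : Stmt16Aux.mS q (Stmt16Aux.idxm q hq x) (Stmt16Aux.Tf q hq σ y)
          = Stmt16Aux.mS q (Stmt16Aux.idxm q hq x) (Stmt16Aux.Tf q hq σ x) :=
        Finset.sum_congr rfl fun k hk => by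
          have hk' := Finset.mem_range.mp hk
          rw [Stmt16Aux.Tf_local hq σ x y k (fun j hj => hmatch j (by omega))]
      simp only [if_neg hyne, if_neg hxne, hidx, hm1, hm2]

end
end
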